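/- arXiv:2006.09583 — 4 statements merged into one kernel-verified Lean document; each statement's English description precedes it below -/
import Mathlib

section
/- Let X_1, X_2, ... be i.i.d. centered real random variables with E[exp(s X_1)] < ∞ for some s > 0, and let Q_n = X_1 + ... + X_n (Q_0 = 0). Then for any L > 0 there exist constants δ, a, b, c > 0 (depending on L and the distribution of X_1) such that for every n ∈ ℕ and every x ≥ 0, P( max_{j ≤ n} max_{k ≤ L log n + δ x} (Q_{j+k} − Q_j) ≥ c log n + x ) ≤ a e^{−b x}. -/
open MeasureTheory ProbabilityTheory Real Finset

set_option maxHeartbeats 1000000 in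
lemma aux_real_stmt0 (s L m δ c x : ℝ) (n K : ℕ) (hs : 0 < s) (hL : 0 < L) (hm : 0 ≤ m)
    (hδ0 : 0 < δ) (hδm : δ * m ≤ s/2) (hsc : s * c = L * m + 2) (hx : 0 ≤ x)
    (M : ℝ) (hMm : Real.log M = m) (hM1 : 1 ≤ M)
    (hK : (K:ℝ) ≤ L * Real.log n + δ * x) :
    ((n:ℝ)+1) * ((K:ℝ)+1) * (Real.exp (-s * (c * Real.log n + x)) * M ^ K)
      ≤ (2*L+2+8*δ/s) * Real.exp (-(s/4) * x) := by
  obtain ⟨r, hr⟩ : ∃ r, Real.log n = r := ⟨_, rfl⟩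
  rw [hr] at hK ⊢
  have hr0 : 0 ≤ r := by
    rcases Nat.eq_zero_or_pos n with h | h
    · rw [← hr, h]; simp
    · rw [← hr]; exact Real.log_nonneg (by exact_mod_cast h)
  have hM0 : (0:ℝ) < M := lt_of_lt_of_le one_pos hM1
  have hMK : M ^ K = Real.exp ((K:ℝ) * m) := by
    rw [← hMm, ← Real.log_pow, Real.exp_log (pow_pos hM0 K)]
  have hδx : 0 ≤ δ * x := mul_nonneg hδ0.le hx
  have hexpo : (K:ℝ) * m + (-s * (c * r + x)) ≤ -2*r + (-(s/2)*x) := by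
    have h1 : (K:ℝ) * m ≤ (L*r + δ*x) * m := mul_le_mul_of_nonneg_right hK hm
    have h2 : -s * (c * r + x) = -(s*c)*r - s*x := by ring
    rw [h2, hsc]
    nlinarith
  have step1 : Real.exp (-s * (c * r + x)) * M ^ K
      ≤ Real.exp (-2*r) * Real.exp (-(s/2)*x) := by
    rw [hMK, ← Real.exp_add, ← Real.exp_add]
    exact Real.exp_le_exp.mpr (by linarith)
  have hK1 : ((K:ℝ)+1) ≤ L*r + δ*x + 1 := by linarith
  have claim1 : ((n:ℝ)+1) * (L*r + δ*x + 1) * Real.exp (-2*r) ≤ 2*L+2+2*(δ*x) := by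
    rcases Nat.eq_zero_or_pos n with h | h
    · have hr' : r = 0 := by rw [← hr, h]; simp
      rw [hr', h]
      simp only [Nat.cast_zero]
      rw [show (-2:ℝ)*0 = 0 by ring, Real.exp_zero]
      nlinarith
    · have hN1 : (1:ℝ) ≤ (n:ℝ) := by exact_mod_cast h
      have hN0 : (0:ℝ) < (n:ℝ) := lt_of_lt_of_le one_pos hN1
      obtain ⟨N, hN⟩ : ∃ N : ℝ, (n:ℝ) = N := ⟨_, rfl⟩
      rw [hN] at hN1 hN0 ⊢
      have heN : Real.exp r = N := by
        rw [← hr, ← hN]; exact Real.exp_log (by rw [hN]; exact hN0)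
      have he2 : Real.exp (-2*r) = N⁻¹ * N⁻¹ := by
        rw [show (-2:ℝ)*r = -r + -r by ring, Real.exp_add, Real.exp_neg, heN]
      have hrN : r ≤ N - 1 := by
        have := Real.log_le_sub_one_of_pos hN0
        rw [← hN, hr] at this; linarith [this]
      have h2 : (N+1) * (L*r + δ*x + 1) ≤ (2*L+2+2*(δ*x)) * N^2 := by
        have hA : 0 ≤ (N-1) * (L*r + δ*x + 1) :=
          mul_nonneg (by linarith) (by nlinarith [mul_nonneg hL.le hr0])
        have hB : 0 ≤ (2*N) * L * (N - r) :=
          mul_nonneg (mul_nonneg (by linarith) hL.le) (by linarith)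
        have hC : 0 ≤ (2*N) * (N-1) * (δ*x+1) :=
          mul_nonneg (mul_nonneg (by linarith) (by linarith)) (by linarith)
        nlinarith [hA, hB, hC]
      rw [he2]
      calc (N+1) * (L*r + δ*x + 1) * (N⁻¹ * N⁻¹)
          ≤ ((2*L+2+2*(δ*x)) * N^2) * (N⁻¹ * N⁻¹) :=
            mul_le_mul_of_nonneg_right h2 (by positivity)
        _ = 2*L+2+2*(δ*x) := by
            rw [show (2*L+2+2*(δ*x)) * N^2 * (N⁻¹ * N⁻¹)
              = (2*L+2+2*(δ*x)) * ((N * N⁻¹) * (N * N⁻¹)) by ring, mul_inv_cancel₀ hN0.ne']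
            ring
  have hxE : x * Real.exp (-(s/4)*x) ≤ 4/s := by
    have hu : (s/4)*x ≤ Real.exp ((s/4)*x) := by
      linarith [Real.add_one_le_exp ((s/4)*x)]
    rw [show -(s/4)*x = -((s/4)*x) by ring, Real.exp_neg, mul_inv_le_iff₀ (Real.exp_pos _)]
    calc x = (4/s) * ((s/4)*x) := by field_simp
      _ ≤ (4/s) * Real.exp ((s/4)*x) :=
          mul_le_mul_of_nonneg_left hu (by positivity)
  have hu0 : 0 < Real.exp (-(s/4)*x) := Real.exp_pos _
  have claim2 : (2*L+2+2*(δ*x)) * Real.exp (-(s/2)*x)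
      ≤ (2*L+2+8*δ/s) * Real.exp (-(s/4)*x) := by
    have hsplit : Real.exp (-(s/2)*x) = Real.exp (-(s/4)*x) * Real.exp (-(s/4)*x) := by
      rw [← Real.exp_add]; ring_nf
    rw [hsplit, ← mul_assoc]
    refine mul_le_mul_of_nonneg_right ?_ hu0.le
    have h8 : 2*δ*(x*Real.exp (-(s/4)*x)) ≤ 2*δ*(4/s) :=
      mul_le_mul_of_nonneg_left hxE (by positivity)
    have hu1 : Real.exp (-(s/4)*x) ≤ 1 := Real.exp_le_one_iff.mpr
      (by nlinarith [mul_nonneg hs.le hx])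
    have h10 := mul_le_mul_of_nonneg_left hu1 (by linarith : (0:ℝ) ≤ 2*L+2)
    have h9 : 2*δ*(4/s) = 8*δ/s := by ring
    nlinarith
  calc ((n:ℝ)+1) * ((K:ℝ)+1) * (Real.exp (-s * (c * r + x)) * M ^ K)
      ≤ ((n:ℝ)+1) * (L*r + δ*x + 1) * (Real.exp (-2*r) * Real.exp (-(s/2)*x)) := by
        have hEp : (0:ℝ) ≤ Real.exp (-s * (c * r + x)) * M ^ K := by positivity
        apply mul_le_mul
        · exact mul_le_mul_of_nonneg_left hK1 (by positivity)
        · exact step1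
        · exact hEp
        · nlinarith [mul_nonneg hL.le hr0]
      _ = (((n:ℝ)+1) * (L*r + δ*x + 1) * Real.exp (-2*r)) * Real.exp (-(s/2)*x) := by ring
      _ ≤ (2*L+2+2*(δ*x)) * Real.exp (-(s/2)*x) :=
          mul_le_mul_of_nonneg_right claim1 (Real.exp_pos _).le
      _ ≤ (2*L+2+8*δ/s) * Real.exp (-(s/4)*x) := claim2

/-- Csörgő–Steinebach type maximal inequality for i.i.d. centered sums with a
finite exponential moment. `Q n = X 1 + ... + X n` is formalized as the sum over
`Finset.range n`. -/
theorem stmt0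
    {Ω : Type*} [MeasurableSpace Ω] (P : Measure Ω) [IsProbabilityMeasure P]
    (X : ℕ → Ω → ℝ) (hmeas : ∀ i, Measurable (X i))
    (hindep : iIndepFun X P)
    (hident : ∀ i, IdentDistrib (X i) (X 0) P P)
    (hcent : ∫ ω, X 0 ω ∂P = 0)
    (s : ℝ) (hs : 0 < s)
    (hexp : Integrable (fun ω => Real.exp (s * X 0 ω)) P)
    (Q : ℕ → Ω → ℝ) (hQ : ∀ n ω, Q n ω = ∑ i ∈ Finset.range n, X i ω)
    (L : ℝ) (hL : 0 < L) :
    ∃ δ a b c : ℝ, 0 < δ ∧ 0 < a ∧ 0 < b ∧ 0 < c ∧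
      ∀ (n : ℕ) (x : ℝ), 0 ≤ x →
        P {ω | ∃ j ≤ n, ∃ k : ℕ, (k : ℝ) ≤ L * Real.log n + δ * x ∧
            Q (j + k) ω - Q j ω ≥ c * Real.log n + x}
          ≤ ENNReal.ofReal (a * Real.exp (-b * x)) := by
  classical
  -- integrability and identical mgf of each coordinate
  have hexp_i : ∀ i, Integrable (fun ω => Real.exp (s * X i ω)) P := by
    intro i
    have h := (hident i).comp (u := fun y => Real.exp (s * y))
      (Real.measurable_exp.comp (measurable_const_mul s))
    exact h.integrable_iff.mpr hexp
  have hmgf_i : ∀ i, mgf (X i) P s = mgf (X 0) P s := by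
    intro i
    have h := (hident i).comp (u := fun y => Real.exp (s * y))
      (Real.measurable_exp.comp (measurable_const_mul s))
    simpa [mgf, Function.comp] using h.integral_eq
  obtain ⟨M, hM_def⟩ : ∃ M, max (mgf (X 0) P s) 1 = M := ⟨_, rfl⟩
  have hMle : mgf (X 0) P s ≤ M := hM_def ▸ le_max_left _ _
  have hM1 : (1:ℝ) ≤ M := hM_def ▸ le_max_right _ _
  obtain ⟨m, hMm⟩ : ∃ m, Real.log M = m := ⟨_, rfl⟩
  have hm0 : 0 ≤ m := hMm ▸ Real.log_nonneg hM1
  have hδ0 : 0 < s/(2*(m+1)) := div_pos hs (by nlinarith)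
  have hδm : s/(2*(m+1)) * m ≤ s/2 := by
    rw [div_mul_eq_mul_div, div_le_div_iff₀ (by nlinarith) (by norm_num)]
    nlinarith
  have hsc : s * ((L*m+2)/s) = L*m+2 := mul_div_cancel₀ _ hs.ne'
  have hc0 : 0 < (L*m+2)/s := div_pos (by nlinarith [mul_nonneg hL.le hm0]) hs
  have ha0 : 0 < 2*L+2+8*(s/(2*(m+1)))/s := by
    have h1 : 0 ≤ 8*(s/(2*(m+1)))/s := div_nonneg (by nlinarith) hs.le
    nlinarith
  refine ⟨s/(2*(m+1)), 2*L+2+8*(s/(2*(m+1)))/s, s/4, (L*m+2)/s,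
    hδ0, ha0, by linarith, hc0, ?_⟩
  intro n x hx
  -- Chernoff bound for each increment
  have chern : ∀ j k : ℕ,
      P {ω | (L*m+2)/s * Real.log n + x ≤ ∑ i ∈ Finset.Ico j (j+k), X i ω}
        ≤ ENNReal.ofReal
            (Real.exp (-s * ((L*m+2)/s * Real.log n + x)) * M ^ k) := by
    intro j k
    set Y : Ω → ℝ := ∑ i ∈ Finset.Ico j (j+k), X i with hY
    have hYapp : ∀ ω, Y ω = ∑ i ∈ Finset.Ico j (j+k), X i ω := by
      intro ω; simp [hY]
    have hint : Integrable (fun ω => Real.exp (s * Y ω)) P :=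
      hindep.integrable_exp_mul_sum hmeas (fun i _ => hexp_i i)
    have hch := measure_ge_le_exp_mul_mgf (X := Y) (μ := P)
      ((L*m+2)/s * Real.log n + x) hs.le hint
    have hmgfY : mgf Y P s ≤ M ^ k := by
      rw [hY, hindep.mgf_sum hmeas]
      calc ∏ i ∈ Finset.Ico j (j+k), mgf (X i) P s
          = ∏ i ∈ Finset.Ico j (j+k), mgf (X 0) P s :=
            Finset.prod_congr rfl fun i _ => hmgf_i i
        _ = (mgf (X 0) P s) ^ k := by
            rw [Finset.prod_const, Nat.card_Ico, Nat.add_sub_cancel_left]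
        _ ≤ M ^ k := pow_le_pow_left₀ mgf_nonneg hMle k
    have h1 : {ω | (L*m+2)/s * Real.log n + x ≤ ∑ i ∈ Finset.Ico j (j+k), X i ω}
        = {ω | (L*m+2)/s * Real.log n + x ≤ Y ω} := by
      ext ω; simp [hYapp]
    rw [h1, ← ENNReal.ofReal_toReal (measure_ne_top P _)]
    refine ENNReal.ofReal_le_ofReal (hch.trans ?_)
    have hE := Real.exp_nonneg (-s * ((L*m+2)/s * Real.log n + x))
    nlinarith [mgf_nonneg (X := Y) (μ := P) (t := s)]
  -- union bound
  obtain ⟨K, hK_def⟩ : ∃ K, Nat.floor (L * Real.log n + s/(2*(m+1)) * x) = K := ⟨_, rfl⟩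
  have hKle : (K:ℝ) ≤ L * Real.log n + s/(2*(m+1)) * x := by
    rw [← hK_def]
    refine Nat.floor_le ?_
    have hlogn : 0 ≤ Real.log n := by
      rcases Nat.eq_zero_or_pos n with h | h
      · rw [h]; simp
      · exact Real.log_nonneg (by exact_mod_cast h)
    have := mul_nonneg hδ0.le hx
    nlinarith [mul_nonneg hL.le hlogn]
  have hsub : {ω | ∃ j ≤ n, ∃ k : ℕ, (k : ℝ) ≤ L * Real.log n + s/(2*(m+1)) * x ∧
        Q (j + k) ω - Q j ω ≥ (L*m+2)/s * Real.log n + x}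
      ⊆ ⋃ j ∈ Finset.range (n+1), ⋃ k ∈ Finset.range (K+1),
          {ω | (L*m+2)/s * Real.log n + x ≤ ∑ i ∈ Finset.Ico j (j+k), X i ω} := by
    rintro ω ⟨j, hj, k, hk, hge⟩
    have hkK : k ≤ K := hK_def ▸ Nat.le_floor hk
    simp only [Set.mem_iUnion, Finset.mem_range, exists_prop]
    refine ⟨j, Nat.lt_succ_of_le hj, k, Nat.lt_succ_of_le hkK, ?_⟩
    have hQQ : Q (j+k) ω - Q j ω = ∑ i ∈ Finset.Ico j (j+k), X i ω := by
      rw [hQ, hQ]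
      exact (Finset.sum_Ico_eq_sub _ (Nat.le_add_right j k)).symm
    rw [Set.mem_setOf_eq, ← hQQ]
    exact hge
  calc P {ω | ∃ j ≤ n, ∃ k : ℕ, (k : ℝ) ≤ L * Real.log n + s/(2*(m+1)) * x ∧
        Q (j + k) ω - Q j ω ≥ (L*m+2)/s * Real.log n + x}
      ≤ P (⋃ j ∈ Finset.range (n+1), ⋃ k ∈ Finset.range (K+1),
          {ω | (L*m+2)/s * Real.log n + x ≤ ∑ i ∈ Finset.Ico j (j+k), X i ω}) :=
        measure_mono hsub
    _ ≤ ∑ j ∈ Finset.range (n+1), P (⋃ k ∈ Finset.range (K+1),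
          {ω | (L*m+2)/s * Real.log n + x ≤ ∑ i ∈ Finset.Ico j (j+k), X i ω}) :=
        measure_biUnion_finset_le _ _
    _ ≤ ∑ j ∈ Finset.range (n+1), ∑ k ∈ Finset.range (K+1),
          P {ω | (L*m+2)/s * Real.log n + x ≤ ∑ i ∈ Finset.Ico j (j+k), X i ω} :=
        Finset.sum_le_sum fun j _ => measure_biUnion_finset_le _ _
    _ ≤ ∑ _j ∈ Finset.range (n+1), ∑ _k ∈ Finset.range (K+1),
          ENNReal.ofReal (Real.exp (-s * ((L*m+2)/s * Real.log n + x)) * M ^ K) := by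
        refine Finset.sum_le_sum fun j _ => Finset.sum_le_sum fun k hk => ?_
        refine (chern j k).trans (ENNReal.ofReal_le_ofReal ?_)
        have hMk : M ^ k ≤ M ^ K :=
          pow_le_pow_right₀ hM1 (Nat.lt_succ_iff.mp (Finset.mem_range.mp hk))
        have hE := Real.exp_nonneg (-s * ((L*m+2)/s * Real.log n + x))
        nlinarith
    _ = ((n+1 : ℕ) : ENNReal) * (((K+1 : ℕ) : ENNReal) *
          ENNReal.ofReal (Real.exp (-s * ((L*m+2)/s * Real.log n + x)) * M ^ K)) := by
        simp [Finset.sum_const, Finset.card_range, mul_comm]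
    _ ≤ ENNReal.ofReal ((2*L+2+8*(s/(2*(m+1)))/s) * Real.exp (-(s/4) * x)) := by
        rw [← ENNReal.ofReal_natCast (n+1), ← ENNReal.ofReal_natCast (K+1),
          ← ENNReal.ofReal_mul (by positivity), ← ENNReal.ofReal_mul (by positivity)]
        refine ENNReal.ofReal_le_ofReal ?_
        have := aux_real_stmt0 s L m (s/(2*(m+1))) ((L*m+2)/s) x n K hs hL hm0
          hδ0 hδm hsc hx M hMm hM1 hKle
        push_cast
        calc ((n:ℝ)+1) * (((K:ℝ)+1) *
              (Real.exp (-s * ((L*m+2)/s * Real.log n + x)) * M ^ K))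
            = ((n:ℝ)+1) * ((K:ℝ)+1) *
              (Real.exp (-s * ((L*m+2)/s * Real.log n + x)) * M ^ K) := by ring
          _ ≤ (2*L+2+8*(s/(2*(m+1)))/s) * Real.exp (-(s/4) * x) := this
end

section
/- Let Z be a standard one-dimensional Wiener process and N a Poisson process with rate λ > 0, with Z and N independent. Then for all t ≥ e and x ≥ 1, P( sup_{0 ≤ u ≤ t} |Z_{N(u)} − Z_{N(⌊u⌋)}| ≥ log t + x ) ≤ 2 e^{λ(e²−1)} e^{−x} + 8 e^{−x}. -/
open MeasureTheory ProbabilityTheory Real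

/-- A standard one-dimensional Wiener process. -/
def IsBrownianMotion {Ω : Type*} [MeasurableSpace Ω] (P : Measure Ω)
    (W : ℝ → Ω → ℝ) : Prop :=
  (∀ t, Measurable (W t)) ∧
  (∀ᵐ ω ∂P, W 0 ω = 0) ∧
  (∀ᵐ ω ∂P, Continuous fun t => W t ω) ∧
  (∀ s t : ℝ, 0 ≤ s → s ≤ t →
    Measure.map (fun ω => W t ω - W s ω) P = gaussianReal 0 (t - s).toNNReal) ∧
  (∀ (t : ℕ → ℝ), Monotone t → 0 ≤ t 0 →
    iIndepFun (fun i ω => W (t (i + 1)) ω - W (t i) ω) P)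

/-- A homogeneous Poisson process with rate `λ`: starts at `0`, nondecreasing paths,
Poisson-distributed increments and independent increments. -/
def IsPoissonProcess {Ω : Type*} [MeasurableSpace Ω] (P : Measure Ω)
    (N : ℝ → Ω → ℕ) (lam : ℝ) : Prop :=
  (∀ t, Measurable (N t)) ∧
  (∀ᵐ ω ∂P, N 0 ω = 0) ∧
  (∀ᵐ ω ∂P, ∀ s t : ℝ, 0 ≤ s → s ≤ t → N s ω ≤ N t ω) ∧
  (∀ s t : ℝ, 0 ≤ s → s ≤ t →
    Measure.map (fun ω => N t ω - N s ω) P = poissonMeasure (lam * (t - s)).toNNReal) ∧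
  (∀ (t : ℕ → ℝ), Monotone t → 0 ≤ t 0 →
    iIndepFun (fun i ω => N (t (i + 1)) ω - N (t i) ω) P)

namespace Stmt3Aux

open scoped NNReal ENNReal

lemma exp_mul_pdf (v : ℝ≥0) (hv : v ≠ 0) (θ y : ℝ) :
    Real.exp (θ * y) * gaussianPDFReal 0 v y
      = Real.exp (θ ^ 2 * v / 2) * gaussianPDFReal (θ * v) v y := by
  have hv' : (v : ℝ) ≠ 0 := by exact_mod_cast hv
  unfold gaussianPDFReal
  rw [mul_left_comm, ← Real.exp_add, mul_left_comm, ← Real.exp_add]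
  congr 2
  field_simp
  ring

lemma integrable_exp_mul_pdf (v : ℝ≥0) (hv : v ≠ 0) (θ : ℝ) :
    Integrable (fun y => Real.exp (θ * y) * gaussianPDFReal 0 v y) := by
  simp_rw [exp_mul_pdf v hv θ]
  exact (integrable_gaussianPDFReal _ v).const_mul _

lemma integral_exp_mul_pdf (v : ℝ≥0) (hv : v ≠ 0) (θ : ℝ) :
    ∫ y, Real.exp (θ * y) * gaussianPDFReal 0 v y = Real.exp (θ ^ 2 * v / 2) := by
  simp_rw [exp_mul_pdf v hv θ]
  rw [integral_const_mul, integral_gaussianPDFReal_eq_one _ hv, mul_one]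

lemma gaussian_abs_tail (v : ℝ≥0) (hv : v ≠ 0) {θ a : ℝ} (hθ : 0 ≤ θ) :
    gaussianReal 0 v {y | a ≤ |y|}
      ≤ ENNReal.ofReal (2 * Real.exp (θ ^ 2 * v / 2 - θ * a)) := by
  set g : ℝ → ℝ := fun y =>
    (Real.exp (θ * (y - a)) + Real.exp (θ * (-y - a))) * gaussianPDFReal 0 v y with hg
  have hgnn : ∀ y, 0 ≤ g y := fun y =>
    mul_nonneg (by positivity) (gaussianPDFReal_nonneg _ _ _)
  have hgeq : g = fun y => Real.exp (-(θ * a)) * (Real.exp (θ * y) * gaussianPDFReal 0 v y)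
      + Real.exp (-(θ * a)) * (Real.exp ((-θ) * y) * gaussianPDFReal 0 v y) := by
    funext y
    have e1 : Real.exp (θ * (y - a)) = Real.exp (-(θ * a)) * Real.exp (θ * y) := by
      rw [← Real.exp_add]; ring_nf
    have e2 : Real.exp (θ * (-y - a)) = Real.exp (-(θ * a)) * Real.exp ((-θ) * y) := by
      rw [← Real.exp_add]; ring_nf
    simp only [hg, e1, e2]; ring
  have hint : Integrable g := by
    rw [hgeq]
    exact ((integrable_exp_mul_pdf v hv θ).const_mul _).add
      ((integrable_exp_mul_pdf v hv (-θ)).const_mul _)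
  have hgint : ∫ y, g y = 2 * Real.exp (θ ^ 2 * v / 2 - θ * a) := by
    rw [hgeq, integral_add ((integrable_exp_mul_pdf v hv θ).const_mul _)
      ((integrable_exp_mul_pdf v hv (-θ)).const_mul _), integral_const_mul, integral_const_mul,
      integral_exp_mul_pdf v hv θ, integral_exp_mul_pdf v hv (-θ)]
    rw [Real.exp_sub]
    have : (-θ) ^ 2 = θ ^ 2 := by ring
    rw [this, Real.exp_neg]
    ring
  have hmg : Measurable fun y => ENNReal.ofReal (g y) := by
    apply Measurable.ennreal_ofReal
    exact (((measurable_id.sub_const _).const_mul θ).exp.add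
      (((measurable_id.neg.sub_const _)).const_mul θ |>.exp)).mul
      (measurable_gaussianPDFReal 0 v)
  calc gaussianReal 0 v {y | a ≤ |y|}
      = ∫⁻ y in {y | a ≤ |y|}, gaussianPDF 0 v y := gaussianReal_apply 0 hv _
    _ ≤ ∫⁻ y in {y | a ≤ |y|}, ENNReal.ofReal (g y) := by
        refine setLIntegral_mono hmg fun y hy => ?_
        rw [gaussianPDF]
        refine ENNReal.ofReal_le_ofReal ?_
        have h1 : (1 : ℝ) ≤ Real.exp (θ * (y - a)) + Real.exp (θ * (-y - a)) := by
          rcases le_abs.mp (Set.mem_setOf_eq ▸ hy) with h | h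
          · have : (1:ℝ) ≤ Real.exp (θ * (y - a)) :=
              Real.one_le_exp (mul_nonneg hθ (by linarith))
            nlinarith [Real.exp_pos (θ * (-y - a))]
          · have : (1:ℝ) ≤ Real.exp (θ * (-y - a)) :=
              Real.one_le_exp (mul_nonneg hθ (by linarith))
            nlinarith [Real.exp_pos (θ * (y - a))]
        have h2 := gaussianPDFReal_nonneg 0 v y
        simp only [hg]
        nlinarith
    _ ≤ ∫⁻ y, ENNReal.ofReal (g y) := setLIntegral_le_lintegral _ _
    _ = ENNReal.ofReal (∫ y, g y) :=
        (ofReal_integral_eq_lintegral_ofReal hint (ae_of_all _ hgnn)).symm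
    _ = ENNReal.ofReal (2 * Real.exp (θ ^ 2 * v / 2 - θ * a)) := by rw [hgint]

lemma gaussian_abs_tail' (j : ℕ) (hj : 1 ≤ j) {a : ℝ} (ha : 0 < a) :
    gaussianReal 0 (j : ℝ≥0) {y | a ≤ |y|}
      ≤ ENNReal.ofReal (2 * Real.exp (-(a ^ 2 / (2 * j)))) := by
  have hj0 : ((j : ℝ≥0)) ≠ 0 := by exact_mod_cast Nat.one_le_iff_ne_zero.mp hj
  have hjR : (0:ℝ) < (j:ℝ) := by exact_mod_cast hj
  have := gaussian_abs_tail (v := (j : ℝ≥0)) hj0 (θ := a / j) (a := a)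
    (div_nonneg ha.le hjR.le)
  convert this using 3
  have : ((((j : ℝ≥0)) : ℝ)) = (j : ℝ) := by simp
  rw [this]
  field_simp
  ring

lemma tsum_exp_ser (w : ℝ) : ∑' n : ℕ, w ^ n / n.factorial = Real.exp w := by
  rw [Real.exp_eq_exp_ℝ]
  exact (NormedSpace.expSeries_div_hasSum_exp w).tsum_eq

lemma poisson_tail (r : ℝ≥0) (M : ℕ) :
    poissonMeasure r {n | M ≤ n}
      ≤ ENNReal.ofReal (Real.exp (r * (Real.exp 2 - 1)) * Real.exp (-(2 * M))) := by
  classical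
  have hs : MeasurableSet {n : ℕ | M ≤ n} := MeasurableSet.of_discrete
  have hpm : poissonMeasure r {n | M ≤ n}
      = ∑' n, ({n : ℕ | M ≤ n}).indicator (poissonPMF r) n := by
    rw [poissonMeasure, Measure.sum_apply _ hs]
    refine tsum_congr fun n => ?_
    rw [Measure.smul_apply, Measure.dirac_apply' _ hs, smul_eq_mul]
    by_cases h : n ∈ {n : ℕ | M ≤ n}
    · simp only [Set.indicator_of_mem h, Pi.one_apply, mul_one]
      rfl
    · simp only [Set.indicator_of_notMem h, mul_zero]
  rw [hpm]
  set w : ℝ := (r:ℝ) * Real.exp 2 with hw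
  set c : ℝ := Real.exp (-(2 * M)) * Real.exp (-(r:ℝ)) with hc
  set f : ℕ → ℝ := fun n => c * (w ^ n / n.factorial) with hf
  have hwnn : 0 ≤ w := by positivity
  have hcnn : 0 ≤ c := by positivity
  have hfnn : ∀ n, 0 ≤ f n := fun n => mul_nonneg hcnn (by positivity)
  have hsum0 : Summable (fun n : ℕ => w ^ n / n.factorial) :=
    Real.summable_pow_div_factorial w
  have hsum : Summable f := hsum0.mul_left c
  have hle : ∀ n : ℕ, ({n : ℕ | M ≤ n}).indicator (poissonPMF r) n ≤ ENNReal.ofReal (f n) := by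
    intro n
    rcases le_or_gt M n with h | h
    · rw [Set.indicator_of_mem (by simpa using h)]
      have hpmf : (poissonPMF r) n = ENNReal.ofReal (poissonPMFReal r n) := rfl
      rw [hpmf]
      refine ENNReal.ofReal_le_ofReal ?_
      rw [poissonPMFReal]
      have e2 : (1:ℝ) ≤ Real.exp (-(2 * (M:ℝ))) * Real.exp 2 ^ n := by
        rw [← Real.exp_nat_mul, ← Real.exp_add]
        refine Real.one_le_exp ?_
        have : (M:ℝ) ≤ n := by exact_mod_cast h
        linarith
      have key : Real.exp (-(r:ℝ)) * (r:ℝ) ^ n / n.factorial * 1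
          ≤ Real.exp (-(r:ℝ)) * (r:ℝ) ^ n / n.factorial
            * (Real.exp (-(2 * (M:ℝ))) * Real.exp 2 ^ n) :=
        mul_le_mul_of_nonneg_left e2 (by positivity)
      refine le_of_le_of_eq (by simpa using key) ?_
      simp only [hf, hc, hw, mul_pow]
      ring
    · rw [Set.indicator_of_notMem (by simpa using h)]
      exact zero_le
  calc ∑' n, ({n : ℕ | M ≤ n}).indicator (poissonPMF r) n
      ≤ ∑' n, ENNReal.ofReal (f n) := ENNReal.tsum_le_tsum hle
    _ = ENNReal.ofReal (∑' n, f n) := (ENNReal.ofReal_tsum_of_nonneg hfnn hsum).symm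
    _ ≤ _ := by
        refine ENNReal.ofReal_le_ofReal (le_of_eq ?_)
        rw [hf, tsum_mul_left, tsum_exp_ser, hc, hw,
          ← Real.exp_add, ← Real.exp_add, ← Real.exp_add]
        congr 1
        ring

lemma exp_half_le : Real.exp (-2) ≤ 1/2 := by
  have h2 : (2:ℝ) ≤ Real.exp 2 := by nlinarith [Real.add_one_le_exp (2:ℝ)]
  rw [Real.exp_neg, one_div]
  exact inv_anti₀ (by norm_num) h2

lemma exp_ineq_j {a : ℝ} {m j : ℕ} (hj : 1 ≤ j) (hjm : j ≤ m) (hma : 2 * (m:ℝ) ≤ a)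
    (ha : 2 ≤ a) :
    2 * Real.exp (-(a ^ 2 / (2 * j))) ≤ 2 * Real.exp (-a) * Real.exp (-2) ^ (m - j) := by
  have hmj : ((m - j : ℕ) : ℝ) = (m:ℝ) - j := by
    push_cast [Nat.cast_sub hjm]; ring
  rw [← Real.exp_nat_mul, mul_assoc, ← Real.exp_add, hmj]
  refine mul_le_mul_of_nonneg_left (Real.exp_le_exp.mpr ?_) (by norm_num)
  have hj' : (1:ℝ) ≤ (j:ℝ) := by exact_mod_cast hj
  have hjm' : (j:ℝ) ≤ (m:ℝ) := by exact_mod_cast hjm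
  have ha2j : 2 * (j:ℝ) ≤ a := by linarith
  have key : (a + 2 * ((m:ℝ) - j)) * (2 * j) ≤ a ^ 2 := by
    nlinarith [mul_nonneg (sub_nonneg.mpr ha2j) (sub_nonneg.mpr hma),
      mul_nonneg (Nat.cast_nonneg (α := ℝ) m) (sub_nonneg.mpr hma),
      sq_nonneg ((m:ℝ) - j)]
  have h2j : (0:ℝ) < 2 * j := by positivity
  have := (le_div_iff₀ h2j).mpr key
  linarith

lemma sum_j_bound (m : ℕ) {a : ℝ} :
    ∑ j ∈ Finset.Icc 1 m, 2 * Real.exp (-a) * Real.exp (-2) ^ (m - j)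
      ≤ 4 * Real.exp (-a) := by
  rw [← Finset.mul_sum]
  have h1 : ∑ j ∈ Finset.Icc 1 m, Real.exp (-2) ^ (m - j)
      = ∑ i ∈ Finset.range m, Real.exp (-2) ^ i := by
    refine Finset.sum_nbij' (fun j => m - j) (fun i => m - i) ?_ ?_ ?_ ?_ ?_
    · intro j hj
      rw [Finset.mem_Icc] at hj
      rw [Finset.mem_range]
      omega
    · intro i hi
      rw [Finset.mem_range] at hi
      rw [Finset.mem_Icc]
      omega
    · intro j hj
      rw [Finset.mem_Icc] at hj
      omega
    · intro i hi
      rw [Finset.mem_range] at hi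
      omega
    · intro j hj
      rfl
  have h2 : ∑ i ∈ Finset.range m, Real.exp (-2) ^ i ≤ 2 := by
    refine le_trans (Finset.sum_le_sum fun i _ => ?_) (sum_geometric_two_le m)
    exact pow_le_pow_left₀ (Real.exp_pos _).le exp_half_le i
  have h3 : 0 ≤ 2 * Real.exp (-a) := by positivity
  nlinarith [Real.exp_pos (-a)]

end Stmt3Aux

open Stmt3Aux

open scoped NNReal ENNReal

/-- for a Wiener process `Z` independent of a Poisson process `N` of rate `λ`,
for `t ≥ e`, `x ≥ 1`:
`P( sup_{0 ≤ u ≤ t} |Z_{N(u)} − Z_{N(⌊u⌋)}| ≥ log t + x ) ≤ 2 e^{λ(e²−1)} e^{−x} + 8 e^{−x}`. -/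
theorem stmt3
    {Ω : Type*} [MeasurableSpace Ω] (P : Measure Ω) [IsProbabilityMeasure P]
    (Z : ℝ → Ω → ℝ) (hZ : IsBrownianMotion P Z)
    (lam : ℝ) (hlam : 0 < lam)
    (N : ℝ → Ω → ℕ) (hN : IsPoissonProcess P N lam)
    (hindep : IndepFun (fun ω => (fun t : ℝ => Z t ω))
      (fun ω => (fun t : ℝ => N t ω)) P) :
    ∀ t x : ℝ, Real.exp 1 ≤ t → 1 ≤ x →
      P {ω | ∃ u : ℝ, 0 ≤ u ∧ u ≤ t ∧
          |Z (N u ω : ℝ) ω - Z (N (⌊u⌋ : ℝ) ω : ℝ) ω| ≥ Real.log t + x}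
        ≤ ENNReal.ofReal (2 * Real.exp (lam * (Real.exp 2 - 1)) * Real.exp (-x)
            + 8 * Real.exp (-x)) := by
  obtain ⟨hZm, hZ0, hZc, hZg, hZi⟩ := hZ
  obtain ⟨hNm, hN0, hNmono, hNp, hNi⟩ := hN
  intro t x ht hx
  have ht0 : (0:ℝ) < t := lt_of_lt_of_le (Real.exp_pos 1) ht
  have h2t : (2:ℝ) ≤ t := le_trans (by nlinarith [Real.add_one_le_exp (1:ℝ)]) ht
  have hlogt : 1 ≤ Real.log t := (Real.le_log_iff_exp_le ht0).mpr ht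
  set a : ℝ := Real.log t + x with ha
  have ha2 : 2 ≤ a := by linarith
  have ha0 : 0 < a := by linarith
  -- the block count and step count
  set K : ℕ := ⌊t⌋₊ with hKdef
  have hK2t : (K:ℝ) + 1 ≤ 2 * t := by
    have := Nat.floor_le ht0.le
    linarith
  set m : ℕ := ⌈a / 2⌉₊ - 1 with hmdef
  have hceil1 : 1 ≤ ⌈a / 2⌉₊ := Nat.one_le_ceil_iff.mpr (by linarith)
  have hmsucc : m + 1 = ⌈a / 2⌉₊ := Nat.succ_pred_eq_of_pos hceil1
  have hma : 2 * (m:ℝ) ≤ a := by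
    have h1 : (⌈a / 2⌉₊ : ℝ) < a / 2 + 1 := Nat.ceil_lt_add_one (by linarith)
    have h2 : ((m:ℝ) + 1) = (⌈a / 2⌉₊ : ℝ) := by exact_mod_cast congrArg (Nat.cast (R := ℝ)) hmsucc
    linarith
  have hm2 : a ≤ 2 * ((m:ℝ) + 1) := by
    have h1 : a / 2 ≤ (⌈a / 2⌉₊ : ℝ) := Nat.le_ceil _
    have h2 : ((m:ℝ) + 1) = (⌈a / 2⌉₊ : ℝ) := by exact_mod_cast congrArg (Nat.cast (R := ℝ)) hmsucc
    linarith
  -- sets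
  set A : ℕ → ℕ → Set Ω := fun n j =>
    {ω | a ≤ |Z (((n + j : ℕ) : ℝ)) ω - Z ((n : ℕ) : ℝ) ω|} with hAdef
  set B : ℕ → Set Ω := fun k => {ω | m + 1 ≤ N ((k:ℝ) + 1) ω - N (k:ℝ) ω} with hBdef
  set C : ℕ → Set Ω := fun k =>
    ⋃ n : ℕ, ⋃ j ∈ Finset.Icc 1 m, ({ω | N (k:ℝ) ω = n} ∩ A n j) with hCdef
  set S : Set Ω := {ω | ∀ s u : ℝ, 0 ≤ s → s ≤ u → N s ω ≤ N u ω} with hSdef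
  have hSc : P Sᶜ = 0 := by
    have h := hNmono
    rw [ae_iff] at h
    have he : Sᶜ = {ω | ¬ ∀ s u : ℝ, 0 ≤ s → s ≤ u → N s ω ≤ N u ω} := by
      rw [hSdef]; ext ω; simp
    rw [he]; exact h
  -- inclusion
  have hincl : {ω | ∃ u : ℝ, 0 ≤ u ∧ u ≤ t ∧
      |Z (N u ω : ℝ) ω - Z (N (⌊u⌋ : ℝ) ω : ℝ) ω| ≥ a}
      ⊆ (⋃ k ∈ Finset.range (K + 1), (B k ∪ C k)) ∪ Sᶜ := by
    intro ω hω
    obtain ⟨u, hu0, hut, hZab⟩ := hω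
    by_cases hωS : ω ∈ S
    · left
      set k : ℕ := ⌊u⌋₊ with hk
      have h0 : (0:ℤ) ≤ ⌊u⌋ := Int.floor_nonneg.mpr hu0
      have hZfl : ((⌊u⌋ : ℤ) : ℝ) = (k : ℝ) := by
        conv_lhs => rw [← Int.toNat_of_nonneg h0]
        rw [Int.floor_toNat]
        push_cast
        rfl
      have hku : (k:ℝ) ≤ u := Nat.floor_le hu0
      have huk1 : u ≤ (k:ℝ) + 1 := (Nat.lt_floor_add_one u).le
      have hkK : k ∈ Finset.range (K + 1) :=
        Finset.mem_range.mpr (Nat.lt_succ_of_le (Nat.floor_le_floor hut))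
      rw [hZfl] at hZab
      refine Set.mem_iUnion₂.mpr ⟨k, hkK, ?_⟩
      by_cases hcase : m + 1 ≤ N ((k:ℝ) + 1) ω - N (k:ℝ) ω
      · exact Or.inl hcase
      · right
        push_neg at hcase
        set n : ℕ := N (k:ℝ) ω with hn
        have hn_le : n ≤ N u ω := hωS (k:ℝ) u (Nat.cast_nonneg k) hku
        have hNu_le : N u ω ≤ N ((k:ℝ) + 1) ω := hωS u ((k:ℝ) + 1) hu0 huk1
        set j : ℕ := N u ω - n with hj
        have hnj : N u ω = n + j := by omega
        have hjm : j ≤ m := by omega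
        have hj1 : 1 ≤ j := by
          rcases Nat.eq_zero_or_pos j with h | h
          · exfalso
            have hnn : N u ω = n := by omega
            rw [hnn] at hZab
            simp only [sub_self, abs_zero, ge_iff_le] at hZab
            linarith
          · exact h
        rw [hnj] at hZab
        refine Set.mem_iUnion.mpr ⟨n, ?_⟩
        refine Set.mem_iUnion₂.mpr ⟨j, Finset.mem_Icc.mpr ⟨hj1, hjm⟩, ?_⟩
        exact ⟨rfl, hZab⟩
    · right; exact hωS
  -- bound for B k
  have hBk : ∀ k : ℕ, P (B k)
      ≤ ENNReal.ofReal (Real.exp (lam * (Real.exp 2 - 1)) * Real.exp (-a)) := by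
    intro k
    have hmap := hNp (k:ℝ) ((k:ℝ) + 1) (Nat.cast_nonneg k) (by linarith)
    have hone : ((k:ℝ) + 1 - k) = 1 := by ring
    rw [hone, mul_one] at hmap
    have hmeas : Measurable fun ω => N ((k:ℝ) + 1) ω - N (k:ℝ) ω := (hNm _).sub (hNm _)
    have hsets : MeasurableSet {n : ℕ | m + 1 ≤ n} := MeasurableSet.of_discrete
    have hBeq : B k = (fun ω => N ((k:ℝ) + 1) ω - N (k:ℝ) ω) ⁻¹' {n | m + 1 ≤ n} := rfl
    rw [hBeq, ← Measure.map_apply hmeas hsets, hmap]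
    refine le_trans (poisson_tail lam.toNNReal (m + 1)) ?_
    refine ENNReal.ofReal_le_ofReal ?_
    rw [Real.coe_toNNReal _ hlam.le]
    refine mul_le_mul_of_nonneg_left (Real.exp_le_exp.mpr ?_) (Real.exp_pos _).le
    push_cast
    linarith
  -- bound for C k
  have hCk : ∀ k : ℕ, P (C k) ≤ ENNReal.ofReal (4 * Real.exp (-a)) := by
    intro k
    have heN : ∀ n : ℕ, MeasurableSet {ω | N (k:ℝ) ω = n} := fun n =>
      (hNm _) (measurableSet_singleton n)
    have hprod : ∀ n j : ℕ, P ({ω | N (k:ℝ) ω = n} ∩ A n j)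
        = P {ω | N (k:ℝ) ω = n} * P (A n j) := by
      intro n j
      have hsy0 : MeasurableSet {y : ℝ | a ≤ |y|} :=
        measurableSet_le measurable_const measurable_abs
      have hSZ : MeasurableSet {f : ℝ → ℝ | a ≤ |f ((n + j : ℕ) : ℝ) - f ((n : ℕ) : ℝ)|} := by
        have hpre : {f : ℝ → ℝ | a ≤ |f ((n + j : ℕ) : ℝ) - f ((n : ℕ) : ℝ)|}
            = (fun f : ℝ → ℝ => f ((n + j : ℕ) : ℝ) - f ((n : ℕ) : ℝ)) ⁻¹' {y | a ≤ |y|} := rfl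
        rw [hpre]
        have m1 : Measurable fun f : ℝ → ℝ => f (((n + j : ℕ)) : ℝ) := measurable_pi_apply _
        have m2 : Measurable fun f : ℝ → ℝ => f ((n : ℕ) : ℝ) := measurable_pi_apply _
        exact (m1.sub m2) hsy0
      have hSN : MeasurableSet {g : ℝ → ℕ | g ((k : ℕ) : ℝ) = n} := by
        have hpre : {g : ℝ → ℕ | g ((k : ℕ) : ℝ) = n}
            = (fun g : ℝ → ℕ => g ((k : ℕ) : ℝ)) ⁻¹' {n} := rfl
        rw [hpre]
        have m3 : Measurable fun g : ℝ → ℕ => g ((k : ℕ) : ℝ) := measurable_pi_apply _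
        exact m3 (measurableSet_singleton n)
      have h := (indepFun_iff_measure_inter_preimage_eq_mul.mp hindep) _ _ hSZ hSN
      have e1 : (fun ω => fun t : ℝ => Z t ω) ⁻¹'
          {f : ℝ → ℝ | a ≤ |f ((n + j : ℕ) : ℝ) - f ((n : ℕ) : ℝ)|} = A n j := rfl
      have e2 : (fun ω => fun t : ℝ => N t ω) ⁻¹' {g : ℝ → ℕ | g ((k : ℕ) : ℝ) = n}
          = {ω | N (k:ℝ) ω = n} := rfl
      rw [e1, e2] at h
      rw [Set.inter_comm, h, mul_comm]
    have hA : ∀ n j : ℕ, 1 ≤ j → j ≤ m → P (A n j)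
        ≤ ENNReal.ofReal (2 * Real.exp (-a) * Real.exp (-2) ^ (m - j)) := by
      intro n j hj hjm
      have hmeasX : Measurable fun ω => Z (((n + j : ℕ)) : ℝ) ω - Z ((n : ℕ) : ℝ) ω :=
        (hZm _).sub (hZm _)
      have hmap := hZg ((n : ℕ) : ℝ) (((n + j : ℕ)) : ℝ) (Nat.cast_nonneg n)
        (by exact_mod_cast Nat.le_add_right n j)
      have hv : ((((n + j : ℕ)) : ℝ) - ((n : ℕ) : ℝ)).toNNReal = (j : ℝ≥0) := by
        push_cast
        rw [add_sub_cancel_left]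
        exact Real.toNNReal_natCast j
      rw [hv] at hmap
      have hAeq : A n j = (fun ω => Z (((n + j : ℕ)) : ℝ) ω - Z ((n : ℕ) : ℝ) ω) ⁻¹'
          {y | a ≤ |y|} := rfl
      have hsy : MeasurableSet {y : ℝ | a ≤ |y|} :=
        measurableSet_le measurable_const measurable_abs
      rw [hAeq, ← Measure.map_apply hmeasX hsy, hmap]
      exact le_trans (gaussian_abs_tail' j hj ha0)
        (ENNReal.ofReal_le_ofReal (exp_ineq_j hj hjm hma ha2))
    have hpart : ∑' n : ℕ, P {ω | N (k:ℝ) ω = n} = 1 := by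
      have hdisj : Pairwise (Function.onFun Disjoint fun n : ℕ => {ω | N (k:ℝ) ω = n}) := by
        intro i j hij
        rw [Function.onFun, Set.disjoint_left]
        intro ω h1 h2
        simp only [Set.mem_setOf_eq] at h1 h2
        exact hij (h1.symm.trans h2)
      rw [← measure_iUnion hdisj heN]
      have huniv : (⋃ n : ℕ, {ω | N (k:ℝ) ω = n}) = Set.univ := by
        ext ω; simp
      rw [huniv, measure_univ]
    calc P (C k) ≤ ∑' n : ℕ, P (⋃ j ∈ Finset.Icc 1 m, ({ω | N (k:ℝ) ω = n} ∩ A n j)) :=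
          measure_iUnion_le _
      _ ≤ ∑' n : ℕ, ∑ j ∈ Finset.Icc 1 m, P ({ω | N (k:ℝ) ω = n} ∩ A n j) :=
          ENNReal.tsum_le_tsum fun n => measure_biUnion_finset_le _ _
      _ ≤ ∑' n : ℕ, P {ω | N (k:ℝ) ω = n} * ENNReal.ofReal (4 * Real.exp (-a)) := by
          refine ENNReal.tsum_le_tsum fun n => ?_
          calc ∑ j ∈ Finset.Icc 1 m, P ({ω | N (k:ℝ) ω = n} ∩ A n j)
              ≤ ∑ j ∈ Finset.Icc 1 m, P {ω | N (k:ℝ) ω = n}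
                  * ENNReal.ofReal (2 * Real.exp (-a) * Real.exp (-2) ^ (m - j)) := by
                refine Finset.sum_le_sum fun j hj => ?_
                rw [hprod n j]
                obtain ⟨hj1, hjm⟩ := Finset.mem_Icc.mp hj
                exact mul_le_mul_right (hA n j hj1 hjm) _
            _ = P {ω | N (k:ℝ) ω = n} * ∑ j ∈ Finset.Icc 1 m,
                  ENNReal.ofReal (2 * Real.exp (-a) * Real.exp (-2) ^ (m - j)) :=
                (Finset.mul_sum _ _ _).symm
            _ ≤ P {ω | N (k:ℝ) ω = n} * ENNReal.ofReal (4 * Real.exp (-a)) := by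
                refine mul_le_mul_right ?_ _
                rw [← ENNReal.ofReal_sum_of_nonneg (fun j _ => by positivity)]
                exact ENNReal.ofReal_le_ofReal (sum_j_bound m)
      _ = ENNReal.ofReal (4 * Real.exp (-a)) := by
          rw [ENNReal.tsum_mul_right, hpart, one_mul]
  -- assemble
  set eL : ℝ := Real.exp (lam * (Real.exp 2 - 1)) with heL
  have hstep : P {ω | ∃ u : ℝ, 0 ≤ u ∧ u ≤ t ∧
      |Z (N u ω : ℝ) ω - Z (N (⌊u⌋ : ℝ) ω : ℝ) ω| ≥ a}
      ≤ (K + 1 : ℕ) * ENNReal.ofReal (eL * Real.exp (-a) + 4 * Real.exp (-a)) := by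
    calc P {ω | ∃ u : ℝ, 0 ≤ u ∧ u ≤ t ∧
        |Z (N u ω : ℝ) ω - Z (N (⌊u⌋ : ℝ) ω : ℝ) ω| ≥ a}
        ≤ P ((⋃ k ∈ Finset.range (K + 1), (B k ∪ C k)) ∪ Sᶜ) := measure_mono hincl
      _ ≤ P (⋃ k ∈ Finset.range (K + 1), (B k ∪ C k)) + P Sᶜ := measure_union_le _ _
      _ = P (⋃ k ∈ Finset.range (K + 1), (B k ∪ C k)) := by rw [hSc, add_zero]
      _ ≤ ∑ k ∈ Finset.range (K + 1), P (B k ∪ C k) := measure_biUnion_finset_le _ _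
      _ ≤ ∑ _k ∈ Finset.range (K + 1),
            ENNReal.ofReal (eL * Real.exp (-a) + 4 * Real.exp (-a)) := by
          refine Finset.sum_le_sum fun k _ => ?_
          refine le_trans (measure_union_le _ _) ?_
          rw [ENNReal.ofReal_add (by positivity) (by positivity)]
          exact add_le_add (hBk k) (hCk k)
      _ = (K + 1 : ℕ) * ENNReal.ofReal (eL * Real.exp (-a) + 4 * Real.exp (-a)) := by
          rw [Finset.sum_const, Finset.card_range, nsmul_eq_mul]
  refine le_trans hstep ?_
  rw [← ENNReal.ofReal_natCast (K + 1), ← ENNReal.ofReal_mul (by positivity)]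
  refine ENNReal.ofReal_le_ofReal ?_
  have hea : Real.exp (-a) = Real.exp (-x) / t := by
    rw [ha, neg_add, Real.exp_add, Real.exp_neg, Real.exp_log ht0]
    ring
  push_cast
  rw [hea]
  have h1 : 0 ≤ eL * (Real.exp (-x) / t) + 4 * (Real.exp (-x) / t) := by positivity
  calc ((K:ℝ) + 1) * (eL * (Real.exp (-x) / t) + 4 * (Real.exp (-x) / t))
      ≤ 2 * t * (eL * (Real.exp (-x) / t) + 4 * (Real.exp (-x) / t)) :=
        mul_le_mul_of_nonneg_right hK2t h1
    _ = 2 * eL * Real.exp (-x) + 8 * Real.exp (-x) := by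
        field_simp
        ring
end

section
/- Let (ξ_k, τ_k), k ≥ 1, be i.i.d. with ξ_k ∈ ℝ^d, τ_k ≥ 0, E τ_1 = μ, κ = E ξ_1/μ, and suppose s_1 > 0 and r > 0 satisfy E exp(s_1 |ξ_1 − κ τ_1|) < ∞ and r log E exp(s_1 |ξ_1 − κ τ_1|) < s_1/6. Set T_k = τ_1 + ... + τ_k and S_k = ξ_1 + ... + ξ_k. Then for all x > 0, P( max_{k ≤ r x} |S_k − κ T_k| > x/6 ) ≤ 2d e^{−q x}, where q = s_1/6 − r log E exp(s_1 |ξ_1 − κ τ_1|) > 0. -/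
open MeasureTheory ProbabilityTheory Real Finset

set_option maxHeartbeats 1000000 in
/-- Doob-type maximal bound in the large-deviation zone for the random walk
`S_k − κ T_k` with i.i.d. increments `ξ_i − κ τ_i`. The norm on `Fin d → ℝ` is the sup
(max) norm. -/
theorem stmt9
    {Ω : Type*} [MeasurableSpace Ω] (P : Measure Ω) [IsProbabilityMeasure P]
    (d : ℕ) (hd : 0 < d)
    (ξ : ℕ → Ω → Fin d → ℝ) (τ : ℕ → Ω → ℝ)
    (hξmeas : ∀ k, Measurable (ξ k)) (hτmeas : ∀ k, Measurable (τ k))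
    (hτnonneg : ∀ k, ∀ᵐ ω ∂P, 0 ≤ τ k ω)
    (hindep : iIndepFun (fun k ω => (ξ k ω, τ k ω)) P)
    (hident : ∀ k, IdentDistrib (fun ω => (ξ k ω, τ k ω)) (fun ω => (ξ 1 ω, τ 1 ω)) P P)
    (μ0 : ℝ) (hμ0def : μ0 = ∫ ω, τ 1 ω ∂P) (hμ0 : 0 < μ0)
    (κ : Fin d → ℝ) (hκ : κ = fun i => (∫ ω, ξ 1 ω i ∂P) / μ0)
    (s₁ r : ℝ) (hs₁ : 0 < s₁) (hr : 0 < r)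
    (hint : Integrable (fun ω => Real.exp (s₁ * ‖ξ 1 ω - τ 1 ω • κ‖)) P)
    (hsmall : r * Real.log (∫ ω, Real.exp (s₁ * ‖ξ 1 ω - τ 1 ω • κ‖) ∂P) < s₁ / 6)
    (q : ℝ) (hq : q = s₁ / 6
        - r * Real.log (∫ ω, Real.exp (s₁ * ‖ξ 1 ω - τ 1 ω • κ‖) ∂P)) :
    ∀ x : ℝ, 0 < x →
      P {ω | ∃ k : ℕ, 1 ≤ k ∧ (k : ℝ) ≤ r * x ∧
          ‖(∑ i ∈ Finset.Icc 1 k, ξ i ω) - (∑ i ∈ Finset.Icc 1 k, τ i ω) • κ‖ > x / 6}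
        ≤ ENNReal.ofReal (2 * d * Real.exp (-q * x)) := by
  intro x hx
  -- the norm of the increments
  set g : (Fin d → ℝ) × ℝ → ℝ := fun p => ‖p.1 - p.2 • κ‖ with hg
  have hgmeas : Measurable g := by
    have : Continuous g := by fun_prop
    exact this.measurable
  set Y : ℕ → Ω → ℝ := fun i ω => ‖ξ i ω - τ i ω • κ‖ with hY
  have hYmeas : ∀ i, Measurable (Y i) := fun i =>
    hgmeas.comp ((hξmeas i).prodMk (hτmeas i))
  have hYindep : iIndepFun Y P :=
    hindep.comp (fun _ => g) (fun _ => hgmeas)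
  have hYident : ∀ i, IdentDistrib (Y i) (Y 1) P P := fun i =>
    (hident i).comp hgmeas
  -- integrability and identification of the mgf of each `Y i`
  have hintY : ∀ i, Integrable (fun ω => Real.exp (s₁ * Y i ω)) P := by
    intro i
    have h1 : IdentDistrib (fun ω => Real.exp (s₁ * Y i ω))
        (fun ω => Real.exp (s₁ * Y 1 ω)) P P :=
      (hYident i).comp (by fun_prop : Measurable fun y : ℝ => Real.exp (s₁ * y))
    exact h1.integrable_iff.mpr hint
  set M : ℝ := ∫ ω, Real.exp (s₁ * ‖ξ 1 ω - τ 1 ω • κ‖) ∂P with hM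
  have hmgfY : ∀ i, mgf (Y i) P s₁ = M := by
    intro i
    have h1 : IdentDistrib (fun ω => Real.exp (s₁ * Y i ω))
        (fun ω => Real.exp (s₁ * Y 1 ω)) P P :=
      (hYident i).comp (by fun_prop : Measurable fun y : ℝ => Real.exp (s₁ * y))
    exact h1.integral_eq
  have hM1 : 1 ≤ M := by
    rw [hM]
    calc (1 : ℝ) = ∫ _ω, (1 : ℝ) ∂P := by simp
    _ ≤ _ := by
        refine integral_mono (integrable_const 1) hint ?_
        intro ω
        simpa using Real.one_le_exp (by positivity)
  -- the horizon
  set n : ℕ := ⌊r * x⌋₊ with hn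
  -- event inclusion
  have hsub : {ω | ∃ k : ℕ, 1 ≤ k ∧ (k : ℝ) ≤ r * x ∧
      ‖(∑ i ∈ Finset.Icc 1 k, ξ i ω) - (∑ i ∈ Finset.Icc 1 k, τ i ω) • κ‖ > x / 6}
      ⊆ {ω | x / 6 ≤ (∑ i ∈ Finset.Icc 1 n, Y i) ω} := by
    rintro ω ⟨k, hk1, hkrx, hknorm⟩
    have hkn : k ≤ n := Nat.le_floor hkrx
    have h1 : ‖(∑ i ∈ Finset.Icc 1 k, ξ i ω) - (∑ i ∈ Finset.Icc 1 k, τ i ω) • κ‖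
        ≤ ∑ i ∈ Finset.Icc 1 k, Y i ω := by
      rw [Finset.sum_smul, ← Finset.sum_sub_distrib]
      exact norm_sum_le _ _
    have h2 : ∑ i ∈ Finset.Icc 1 k, Y i ω ≤ ∑ i ∈ Finset.Icc 1 n, Y i ω := by
      refine Finset.sum_le_sum_of_subset_of_nonneg
        (Finset.Icc_subset_Icc_right hkn) ?_
      intro i _ _; exact norm_nonneg _
    have : x / 6 ≤ ∑ i ∈ Finset.Icc 1 n, Y i ω := le_trans (le_of_lt hknorm) (h1.trans h2)
    simpa using this
  -- Chernoff bound
  have hintsum : Integrable (fun ω => Real.exp (s₁ * (∑ i ∈ Finset.Icc 1 n, Y i) ω)) P :=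
    hYindep.integrable_exp_mul_sum hYmeas (fun i _ => hintY i)
  have hcher := measure_ge_le_exp_mul_mgf (μ := P) (X := ∑ i ∈ Finset.Icc 1 n, Y i)
    (t := s₁) (x / 6) hs₁.le hintsum
  have hmgfsum : mgf (∑ i ∈ Finset.Icc 1 n, Y i) P s₁ = M ^ n := by
    rw [hYindep.mgf_sum hYmeas]
    rw [Finset.prod_congr rfl fun i _ => hmgfY i, Finset.prod_const,
      Nat.card_Icc]
    simp
  have hMpos : (0:ℝ) < M := lt_of_lt_of_le one_pos hM1
  have hMn : M ^ n ≤ Real.exp (r * x * Real.log M) := by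
    have h1 : M ^ n = Real.exp ((n : ℝ) * Real.log M) := by
      rw [Real.exp_nat_mul, Real.exp_log hMpos]
    rw [h1]
    apply Real.exp_le_exp.mpr
    have hlognn : 0 ≤ Real.log M := Real.log_nonneg hM1
    have hnrx : (n : ℝ) ≤ r * x := Nat.floor_le (by positivity)
    exact mul_le_mul_of_nonneg_right hnrx hlognn
  -- assemble
  have hfinal : (P {ω | x / 6 ≤ (∑ i ∈ Finset.Icc 1 n, Y i) ω}).toReal
      ≤ Real.exp (-q * x) := by
    calc (P {ω | x / 6 ≤ (∑ i ∈ Finset.Icc 1 n, Y i) ω}).toReal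
        ≤ Real.exp (-s₁ * (x / 6)) * mgf (∑ i ∈ Finset.Icc 1 n, Y i) P s₁ := hcher
      _ ≤ Real.exp (-s₁ * (x / 6)) * Real.exp (r * x * Real.log M) := by
          rw [hmgfsum]
          exact mul_le_mul_of_nonneg_left hMn (Real.exp_pos _).le
      _ = Real.exp (-q * x) := by
          rw [← Real.exp_add]
          congr 1
          rw [hq]
          ring
  have hne : P {ω | x / 6 ≤ (∑ i ∈ Finset.Icc 1 n, Y i) ω} ≠ ⊤ := measure_ne_top _ _
  calc P {ω | ∃ k : ℕ, 1 ≤ k ∧ (k : ℝ) ≤ r * x ∧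
        ‖(∑ i ∈ Finset.Icc 1 k, ξ i ω) - (∑ i ∈ Finset.Icc 1 k, τ i ω) • κ‖ > x / 6}
      ≤ P {ω | x / 6 ≤ (∑ i ∈ Finset.Icc 1 n, Y i) ω} := measure_mono hsub
    _ = ENNReal.ofReal (P {ω | x / 6 ≤ (∑ i ∈ Finset.Icc 1 n, Y i) ω}).toReal :=
        (ENNReal.ofReal_toReal hne).symm
    _ ≤ ENNReal.ofReal (Real.exp (-q * x)) := ENNReal.ofReal_le_ofReal hfinal
    _ ≤ ENNReal.ofReal (2 * d * Real.exp (-q * x)) := by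
        apply ENNReal.ofReal_le_ofReal
        nlinarith [Real.exp_pos (-q * x), (Nat.one_le_cast (α := ℝ)).mpr hd]
end

section
/- Let B be a standard d-dimensional Wiener process. Then for all t ≥ e and x ≥ 0, P( sup_{u ≤ t} |W*_{N(y(u))} − W*_{u/γ}| > 3d log t + x ) ≤ 4(γ^{-1} + e^{-1}) e^{1/2 − x/(3d)}, whenever the time arguments satisfy |u/γ − N(y(u))| ≤ 1 for all u, where y(u) = N^{-1}(u/γ), W* is a standard d-dimensional Wiener process, N a Poisson process, and γ > 0. -/
open MeasureTheory ProbabilityTheory Real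

/-- A standard `d`-dimensional Wiener process. -/
def IsBrownianMotionVec {Ω : Type*} [MeasurableSpace Ω] (P : Measure Ω) (d : ℕ)
    (W : ℝ → Ω → Fin d → ℝ) : Prop :=
  (∀ i : Fin d, IsBrownianMotion P (fun t ω => W t ω i)) ∧
  iIndepFun (fun i ω => fun t : ℝ => W t ω i) P

/-- First-passage time of the Poisson process: `N⁻¹(s) = inf {u : N(u) > s}`. -/
noncomputable def firstPassage {Ω : Type*} (N : ℝ → Ω → ℕ) (s : ℝ) (ω : Ω) : ℝ :=
  sInf {u : ℝ | 0 ≤ u ∧ (N u ω : ℝ) > s}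

open scoped NNReal ENNReal

lemma gauss_pdf_shift {v : ℝ≥0} (hv0 : v ≠ 0) (lam u : ℝ) :
    Real.exp (lam * u) * gaussianPDFReal 0 v u
      = Real.exp (lam ^ 2 * v / 2) * gaussianPDFReal (lam * v) v u := by
  have hv : (0:ℝ) < (v:ℝ) := lt_of_le_of_ne (v.coe_nonneg) (by exact_mod_cast (Ne.symm hv0))
  simp only [gaussianPDFReal_def]
  rw [mul_left_comm, mul_left_comm (Real.exp (lam ^ 2 * (v:ℝ) / 2))]
  congr 1
  rw [← Real.exp_add, ← Real.exp_add]
  congr 1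
  field_simp
  ring

/-- Chernoff tail bound for a centered Gaussian with variance at most 2. -/
lemma gauss_tail_aux {v : ℝ≥0} (hv : (v:ℝ) ≤ 2) {y : ℝ} (hy : 0 < y) :
    gaussianReal 0 v (Set.Ici y) ≤ ENNReal.ofReal (Real.exp (-(y^2)/4)) := by
  rcases eq_or_ne v 0 with rfl | hv0
  · rw [gaussianReal_zero_var]
    rw [Measure.dirac_apply' _ measurableSet_Ici]
    rw [Set.indicator_of_notMem (by simpa using hy)]
    positivity
  · rw [gaussianReal_apply_eq_integral _ hv0]
    refine ENNReal.ofReal_le_ofReal ?_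
    set lam : ℝ := y / 2 with hlam
    have hlam0 : 0 ≤ lam := by positivity
    set g : ℝ → ℝ := fun u => Real.exp (lam * (u - y)) * gaussianPDFReal 0 v u with hg
    have hgeq : g = fun u => (Real.exp (lam ^ 2 * v / 2 - lam * y)) *
        gaussianPDFReal (lam * v) v u := by
      funext u
      simp only [hg]
      calc Real.exp (lam * (u - y)) * gaussianPDFReal 0 v u
          = Real.exp (-(lam * y)) * (Real.exp (lam * u) * gaussianPDFReal 0 v u) := by
            rw [← mul_assoc, ← Real.exp_add]
            congr 2
            ring
        _ = Real.exp (-(lam * y)) * (Real.exp (lam ^ 2 * v / 2) *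
              gaussianPDFReal (lam * v) v u) := by rw [gauss_pdf_shift hv0]
        _ = Real.exp (lam ^ 2 * v / 2 - lam * y) * gaussianPDFReal (lam * v) v u := by
            rw [← mul_assoc, ← Real.exp_add]
            congr 2
            ring
    have hgint : Integrable g := by
      rw [hgeq]
      exact (integrable_gaussianPDFReal _ _).const_mul _
    have h1 : ∫ u in Set.Ici y, gaussianPDFReal 0 v u ≤ ∫ u in Set.Ici y, g u := by
      refine setIntegral_mono_on ((integrable_gaussianPDFReal _ _).integrableOn)
        hgint.integrableOn measurableSet_Ici ?_
      intro u hu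
      rw [hg]
      nth_rewrite 1 [← one_mul (gaussianPDFReal 0 v u)]
      refine mul_le_mul_of_nonneg_right ?_ (gaussianPDFReal_nonneg _ _ _)
      rw [← Real.exp_zero]
      exact Real.exp_le_exp.2 (by nlinarith [Set.mem_Ici.1 hu])
    have h2 : ∫ u in Set.Ici y, g u ≤ ∫ u, g u := by
      refine setIntegral_le_integral hgint ?_
      filter_upwards with u
      simp only [hg]
      exact mul_nonneg (Real.exp_nonneg _) (gaussianPDFReal_nonneg _ _ _)
    have h3 : ∫ u, g u = Real.exp (lam ^ 2 * v / 2 - lam * y) := by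
      rw [hgeq, integral_const_mul, integral_gaussianPDFReal_eq_one _ hv0, mul_one]
    have h4 : lam ^ 2 * v / 2 - lam * y ≤ -(y^2)/4 := by
      have : lam ^ 2 * v / 2 ≤ lam ^ 2 := by nlinarith [sq_nonneg lam]
      rw [hlam] at *
      nlinarith
    calc ∫ u in Set.Ici y, gaussianPDFReal 0 v u ≤ ∫ u, g u := le_trans h1 h2
      _ ≤ Real.exp (-(y^2)/4) := by rw [h3]; exact Real.exp_le_exp.2 h4

/-- A centered Gaussian puts mass at least 1/2 on `[0, ∞)` and on `(-∞, 0]`. -/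
lemma gauss_half {v : ℝ≥0} :
    (2 : ℝ≥0∞)⁻¹ ≤ gaussianReal 0 v (Set.Ici 0) ∧
    (2 : ℝ≥0∞)⁻¹ ≤ gaussianReal 0 v (Set.Iic 0) := by
  have hmap : (gaussianReal 0 v).map (fun x : ℝ => -x) = gaussianReal 0 v := by
    have := gaussianReal_map_const_mul (μ := 0) (v := v) (-1)
    simpa [neg_one_mul] using this
  have hsym : gaussianReal 0 v (Set.Iic 0) = gaussianReal 0 v (Set.Ici 0) := by
    conv_lhs => rw [← hmap]
    rw [Measure.map_apply measurable_neg measurableSet_Iic]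
    congr 1
    ext z
    simp
  have hun : gaussianReal 0 v (Set.Ici 0) + gaussianReal 0 v (Set.Iic 0) ≥ 1 := by
    have : (Set.Ici (0:ℝ)) ∪ (Set.Iic 0) = Set.univ := by
      ext z; simp [le_total]
    calc (1:ℝ≥0∞) = gaussianReal 0 v Set.univ := by simp
      _ ≤ _ := by rw [← this]; exact measure_union_le _ _
  constructor
  · rw [hsym] at hun
    by_contra h
    push_neg at h
    have : gaussianReal 0 v (Set.Ici 0) + gaussianReal 0 v (Set.Ici 0) < 1 := by
      calc _ < (2:ℝ≥0∞)⁻¹ + (2:ℝ≥0∞)⁻¹ := by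
              exact ENNReal.add_lt_add h h
        _ = 1 := by rw [← two_mul]; exact ENNReal.mul_inv_cancel (by norm_num) (by norm_num)
    exact absurd hun (not_le.2 this)
  · rw [hsym]
    rw [hsym] at hun
    by_contra h
    push_neg at h
    have : gaussianReal 0 v (Set.Ici 0) + gaussianReal 0 v (Set.Ici 0) < 1 := by
      calc _ < (2:ℝ≥0∞)⁻¹ + (2:ℝ≥0∞)⁻¹ := ENNReal.add_lt_add h h
        _ = 1 := by rw [← two_mul]; exact ENNReal.mul_inv_cancel (by norm_num) (by norm_num)
    exact absurd hun (not_le.2 this)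

lemma levy_max {Ω : Type*} [MeasurableSpace Ω] (P : Measure Ω) [IsProbabilityMeasure P]
    (X : ℕ → Ω → ℝ) (hXm : ∀ i, Measurable (X i))
    (hind : iIndepFun X P)
    (n : ℕ) (y : ℝ) (hy : 0 < y)
    (hsym : ∀ k, k ≤ n →
      (2 : ℝ≥0∞)⁻¹ ≤ P {ω | 0 ≤ ∑ i ∈ Finset.Ico k n, X i ω} ∧
      (2 : ℝ≥0∞)⁻¹ ≤ P {ω | ∑ i ∈ Finset.Ico k n, X i ω ≤ 0}) :
    P {ω | ∃ k, k ≤ n ∧ |∑ i ∈ Finset.range k, X i ω| > y}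
      ≤ 2 * P {ω | |∑ i ∈ Finset.range n, X i ω| > y} := by
  classical
  set S : ℕ → Ω → ℝ := fun k ω => ∑ i ∈ Finset.range k, X i ω with hS
  set D : ℕ → Ω → ℝ := fun k ω => ∑ i ∈ Finset.Ico k n, X i ω with hD
  have hSm : ∀ k, Measurable (S k) := fun k => Finset.measurable_sum _ (fun i _ => hXm i)
  have hDm : ∀ k, Measurable (D k) := fun k => Finset.measurable_sum _ (fun i _ => hXm i)
  have hSD : ∀ k, k ≤ n → ∀ ω, S n ω = S k ω + D k ω := by
    intro k hk ω
    simp only [hS, hD, Finset.sum_Ico_eq_sub _ hk]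
    ring
  set E : Set Ω := {ω | |S n ω| > y} with hE
  have hEm : MeasurableSet E := measurableSet_lt measurable_const (hSm n).abs
  set B : ℕ → Set Ω := fun k => {ω | |S k ω| > y ∧ ∀ j, j < k → |S j ω| ≤ y} with hB
  set Bp : ℕ → Set Ω := fun k => {ω | S k ω > y ∧ ∀ j, j < k → |S j ω| ≤ y} with hBp
  set Bm : ℕ → Set Ω := fun k => {ω | S k ω < -y ∧ ∀ j, j < k → |S j ω| ≤ y} with hBm
  have hInd : ∀ k, MeasurableSet {ω | ∀ j, j < k → |S j ω| ≤ y} := by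
    intro k
    have : {ω | ∀ j, j < k → |S j ω| ≤ y} = ⋂ j ∈ Finset.range k, {ω | |S j ω| ≤ y} := by
      ext ω; simp [Finset.mem_range]
    rw [this]
    exact MeasurableSet.biInter (Finset.range k).countable_toSet
      (fun j _ => measurableSet_le (hSm j).abs measurable_const)
  have hBmeas : ∀ k, MeasurableSet (B k) := by
    intro k
    have : B k = {ω | y < |S k ω|} ∩ {ω | ∀ j, j < k → |S j ω| ≤ y} := by
      rfl
    rw [this]
    exact (measurableSet_lt measurable_const (hSm k).abs).inter (hInd k)
  have hBpmeas : ∀ k, MeasurableSet (Bp k) := by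
    intro k
    exact (measurableSet_lt measurable_const (hSm k)).inter (hInd k)
  have hBmmeas : ∀ k, MeasurableSet (Bm k) := by
    intro k
    exact (measurableSet_lt (hSm k) measurable_const).inter (hInd k)
  -- decomposition of the maximal event
  have hcover : {ω | ∃ k, k ≤ n ∧ |S k ω| > y} = ⋃ k ∈ Finset.range (n+1), B k := by
    ext ω
    simp only [Set.mem_setOf_eq, Set.mem_iUnion, Finset.mem_range, Nat.lt_succ_iff]
    constructor
    · rintro ⟨k, hk, hky⟩
      have hex : ∃ m, |S m ω| > y := ⟨k, hky⟩
      refine ⟨Nat.find hex, le_trans (Nat.find_min' hex hky) hk, Nat.find_spec hex, ?_⟩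
      intro j hj
      exact not_lt.1 (Nat.find_min hex hj)
    · rintro ⟨k, hk, hky, -⟩
      exact ⟨k, hk, hky⟩
  have hdisj : (↑(Finset.range (n+1)) : Set ℕ).PairwiseDisjoint B := by
    intro k _ l _ hkl
    rcases hkl.lt_or_gt with h | h
    · refine Set.disjoint_left.2 fun ω hk' hl' => ?_
      exact absurd (hl'.2 k h) (not_le.2 hk'.1)
    · refine Set.disjoint_left.2 fun ω hk' hl' => ?_
      exact absurd (hk'.2 l h) (not_le.2 hl'.1)
  -- key: independence-based reflection bound for each k
  have hkey : ∀ k, k ≤ n → P (B k) ≤ 2 * P (B k ∩ E) := by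
    intro k hk
    -- independence of the first k increments and the tail sum
    have hTdisj : Disjoint (Finset.range k) (Finset.Ico k n) := by
      rw [Finset.disjoint_left]
      intro i hi hi'
      rw [Finset.mem_range] at hi
      rw [Finset.mem_Ico] at hi'
      omega
    have hIF := hind.indepFun_finset (Finset.range k) (Finset.Ico k n) hTdisj hXm
    have hψm : Measurable (fun g : (↥(Finset.Ico k n) → ℝ) =>
        ∑ i ∈ (Finset.Ico k n).attach, g i) :=
      Finset.measurable_sum _ (fun i _ => measurable_pi_apply i)
    have hIF2 := hIF.comp measurable_id hψm
    simp only [Function.id_comp] at hIF2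
    have hcompD : ((fun g : (↥(Finset.Ico k n) → ℝ) =>
        ∑ i ∈ (Finset.Ico k n).attach, g i) ∘ (fun a (i : ↥(Finset.Ico k n)) => X i a))
        = D k := by
      funext a
      simp only [Function.comp_apply, hD]
      exact Finset.sum_attach (Finset.Ico k n) (fun i => X i a)
    rw [hcompD] at hIF2
    -- partial sums as functions of the tuple
    set ps : (↥(Finset.range k) → ℝ) → ℕ → ℝ :=
      fun x j => ∑ i ∈ (Finset.range k).attach, if (i : ℕ) < j then x i else 0 with hps
    have hpsm : ∀ j, Measurable (fun x => ps x j) := by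
      intro j
      apply Finset.measurable_sum
      intro i _
      by_cases h : (i : ℕ) < j
      · simpa [h] using measurable_pi_apply i
      · simpa [h] using (measurable_const : Measurable (fun _ : (↥(Finset.range k) → ℝ) => (0:ℝ)))
    have hps_eq : ∀ ω, ∀ j, j ≤ k →
        ps (fun i : ↥(Finset.range k) => X i ω) j = S j ω := by
      intro ω j hj
      simp only [hps]
      rw [Finset.sum_attach (Finset.range k) (fun i => if i < j then X i ω else 0)]
      rw [← Finset.sum_filter]
      congr 1
      ext i
      simp only [Finset.mem_filter, Finset.mem_range]
      omega
    set L : Ω → (↥(Finset.range k) → ℝ) :=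
      fun ω (i : ↥(Finset.range k)) => X i ω with hL
    have hpre : ∀ (c : ℝ → ℝ → Prop), (∀ z, MeasurableSet {w : ℝ | c w z}) →
        MeasurableSet[MeasurableSpace.comap L inferInstance]
          {ω | c (S k ω) y ∧ ∀ j, j < k → |S j ω| ≤ y} := by
      intro c hc
      refine ⟨{x | c (ps x k) y ∧ ∀ j, j < k → |ps x j| ≤ y}, ?_, ?_⟩
      · have : {x | c (ps x k) y ∧ ∀ j, j < k → |ps x j| ≤ y}
            = ((fun x => ps x k) ⁻¹' {w | c w y}) ∩
              ⋂ j ∈ Finset.range k, {x | |ps x j| ≤ y} := by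
          ext x; simp [Finset.mem_range]
        rw [this]
        exact ((hpsm k) (hc y)).inter (MeasurableSet.biInter (Finset.range k).countable_toSet
          (fun j _ => measurableSet_le ((hpsm j).abs) measurable_const))
      · ext ω
        simp only [Set.mem_preimage, Set.mem_setOf_eq, hL]
        constructor
        · rintro ⟨h1, h2⟩
          refine ⟨by rwa [hps_eq ω k le_rfl] at h1, fun j hj => ?_⟩
          have := h2 j hj
          rwa [hps_eq ω j (le_of_lt hj)] at this
        · rintro ⟨h1, h2⟩
          refine ⟨by rwa [hps_eq ω k le_rfl], fun j hj => ?_⟩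
          rw [hps_eq ω j (le_of_lt hj)]
          exact h2 j hj
    have hBp_pre : MeasurableSet[MeasurableSpace.comap L inferInstance] (Bp k) := by
      have := hpre (fun w z => w > z) (fun z => measurableSet_lt measurable_const measurable_id)
      simpa [hBp] using this
    have hBm_pre : MeasurableSet[MeasurableSpace.comap L inferInstance] (Bm k) := by
      have := hpre (fun w z => w < -z) (fun z => measurableSet_lt measurable_id measurable_const)
      simpa [hBm] using this
    have hDge : MeasurableSet[MeasurableSpace.comap (D k) inferInstance] {ω | 0 ≤ D k ω} :=
      ⟨Set.Ici 0, measurableSet_Ici, rfl⟩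
    have hDle : MeasurableSet[MeasurableSpace.comap (D k) inferInstance] {ω | D k ω ≤ 0} :=
      ⟨Set.Iic 0, measurableSet_Iic, rfl⟩
    have hmul1 : P (Bp k ∩ {ω | 0 ≤ D k ω}) = P (Bp k) * P {ω | 0 ≤ D k ω} :=
      hIF2.meas_inter hBp_pre hDge
    have hmul2 : P (Bm k ∩ {ω | D k ω ≤ 0}) = P (Bm k) * P {ω | D k ω ≤ 0} :=
      hIF2.meas_inter hBm_pre hDle
    -- the two reflected pieces sit inside B k ∩ E
    have hsub1 : Bp k ∩ {ω | 0 ≤ D k ω} ⊆ B k ∩ E := by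
      rintro ω ⟨⟨h1, h2⟩, h3⟩
      have hSk : |S k ω| > y := lt_of_lt_of_le h1 (le_abs_self _)
      have hSn : S n ω > y := by
        rw [hSD k hk ω]
        have := Set.mem_setOf_eq ▸ h3
        linarith
      exact ⟨⟨hSk, h2⟩, lt_of_lt_of_le hSn (le_abs_self _)⟩
    have hsub2 : Bm k ∩ {ω | D k ω ≤ 0} ⊆ B k ∩ E := by
      rintro ω ⟨⟨h1, h2⟩, h3⟩
      have hSk : |S k ω| > y := lt_of_lt_of_le (by linarith : y < -(S k ω)) (neg_le_abs _)
      have hSn : S n ω < -y := by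
        rw [hSD k hk ω]
        have := Set.mem_setOf_eq ▸ h3
        linarith
      refine ⟨⟨hSk, h2⟩, ?_⟩
      have : y < -(S n ω) := by linarith
      exact lt_of_lt_of_le this (neg_le_abs _)
    have hdisj12 : Disjoint (Bp k ∩ {ω | 0 ≤ D k ω}) (Bm k ∩ {ω | D k ω ≤ 0}) := by
      refine Set.disjoint_left.2 ?_
      rintro ω ⟨⟨h1, -⟩, -⟩ ⟨⟨h2, -⟩, -⟩
      linarith
    have hBsplit : B k = Bp k ∪ Bm k := by
      ext ω
      simp only [hB, hBp, hBm, Set.mem_setOf_eq, Set.mem_union]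
      constructor
      · rintro ⟨h1, h2⟩
        rcases lt_abs.1 h1 with h | h
        · exact Or.inl ⟨h, h2⟩
        · exact Or.inr ⟨by linarith, h2⟩
      · rintro (⟨h1, h2⟩ | ⟨h1, h2⟩)
        · exact ⟨lt_of_lt_of_le h1 (le_abs_self _), h2⟩
        · refine ⟨?_, h2⟩
          have : y < -(S k ω) := by linarith
          exact lt_of_lt_of_le this (neg_le_abs _)
    have hBpBmdisj : Disjoint (Bp k) (Bm k) := by
      refine Set.disjoint_left.2 ?_
      rintro ω ⟨h1, -⟩ ⟨h2, -⟩
      linarith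
    have hsum : P (B k) = P (Bp k) + P (Bm k) := by
      rw [hBsplit]
      exact measure_union hBpBmdisj (hBmmeas k)
    obtain ⟨hge, hle⟩ := hsym k hk
    have step : (2:ℝ≥0∞)⁻¹ * P (B k) ≤ P (B k ∩ E) := by
      calc (2:ℝ≥0∞)⁻¹ * P (B k) = P (Bp k) * (2:ℝ≥0∞)⁻¹ + P (Bm k) * (2:ℝ≥0∞)⁻¹ := by
            rw [hsum]; ring
        _ ≤ P (Bp k) * P {ω | 0 ≤ D k ω} + P (Bm k) * P {ω | D k ω ≤ 0} := by
            refine add_le_add ?_ ?_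
            · exact mul_le_mul_right hge _
            · exact mul_le_mul_right hle _
        _ = P (Bp k ∩ {ω | 0 ≤ D k ω}) + P (Bm k ∩ {ω | D k ω ≤ 0}) := by
            rw [hmul1, hmul2]
        _ = P ((Bp k ∩ {ω | 0 ≤ D k ω}) ∪ (Bm k ∩ {ω | D k ω ≤ 0})) := by
            refine (measure_union hdisj12 ?_).symm
            exact (hBmmeas k).inter (measurableSet_le (hDm k) measurable_const)
        _ ≤ P (B k ∩ E) := measure_mono (Set.union_subset hsub1 hsub2)
    calc P (B k) = 2 * ((2:ℝ≥0∞)⁻¹ * P (B k)) := by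
          rw [← mul_assoc, ENNReal.mul_inv_cancel (by norm_num) (by norm_num), one_mul]
      _ ≤ 2 * P (B k ∩ E) := by gcongr
  -- put everything together
  rw [hcover, measure_biUnion_finset hdisj (fun k _ => hBmeas k)]
  have : ∑ k ∈ Finset.range (n+1), P (B k) ≤ ∑ k ∈ Finset.range (n+1), 2 * P (B k ∩ E) := by
    refine Finset.sum_le_sum ?_
    intro k hk
    exact hkey k (Nat.lt_succ_iff.1 (Finset.mem_range.1 hk))
  refine le_trans this ?_
  rw [← Finset.mul_sum]
  gcongr
  have hdisj' : (↑(Finset.range (n+1)) : Set ℕ).PairwiseDisjoint (fun k => B k ∩ E) := by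
    intro k hk l hl hkl
    exact (hdisj hk hl hkl).mono (Set.inter_subset_left) (Set.inter_subset_left)
  rw [← measure_biUnion_finset hdisj' (fun k _ => (hBmeas k).inter hEm)]
  refine measure_mono ?_
  intro ω hω
  simp only [Set.mem_iUnion] at hω
  obtain ⟨k, -, -, h2⟩ := hω
  exact h2
lemma bm_finite_sup {Ω : Type*} [MeasurableSpace Ω] (P : Measure Ω) [IsProbabilityMeasure P]
    (W : ℝ → Ω → ℝ)
    (hmeas : ∀ t, Measurable (W t))
    (hgauss : ∀ s t : ℝ, 0 ≤ s → s ≤ t →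
      Measure.map (fun ω => W t ω - W s ω) P = gaussianReal 0 (t - s).toNNReal)
    (hindep : ∀ (t : ℕ → ℝ), Monotone t → 0 ≤ t 0 →
      iIndepFun (fun i ω => W (t (i + 1)) ω - W (t i) ω) P)
    (a : ℝ) (ha : 0 ≤ a) (y : ℝ) (hy : 0 < y)
    (F : Finset ℝ) (haF : a ∈ F) (hbF : a + 2 ∈ F) (hF : ∀ r ∈ F, a ≤ r ∧ r ≤ a + 2) :
    P {ω | ∃ r ∈ F, |W r ω - W a ω| > y}
      ≤ ENNReal.ofReal (4 * Real.exp (-(y^2)/4)) := by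
  classical
  set c := F.card with hc
  have hc0 : 0 < c := Finset.card_pos.2 ⟨a, haF⟩
  set iso := F.orderIsoOfFin (rfl : F.card = c) with hiso
  set τ : ℕ → ℝ := fun k => if h : k < c then (iso ⟨k, h⟩ : ℝ) else a + 2 with hτ
  have hτmem : ∀ k, a ≤ τ k ∧ τ k ≤ a + 2 := by
    intro k
    by_cases h : k < c
    · simp only [hτ, dif_pos h]
      exact hF _ (iso ⟨k, h⟩).2
    · simp only [hτ, dif_neg h]
      exact ⟨by linarith, le_rfl⟩
  have hτmemF : ∀ k, k < c → τ k ∈ F := by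
    intro k h
    simp only [hτ, dif_pos h]
    exact (iso ⟨k, h⟩).2
  have hτmono : Monotone τ := by
    intro i j hij
    rcases lt_or_ge j c with hj | hj
    · have hi : i < c := lt_of_le_of_lt hij hj
      simp only [hτ, dif_pos hi, dif_pos hj]
      exact Subtype.coe_le_coe.2 (iso.monotone (Fin.mk_le_mk.2 hij))
    · have hτj : τ j = a + 2 := by simp [hτ, Nat.not_lt.2 hj]
      rw [hτj]
      exact (hτmem i).2
  have hτ0 : τ 0 = a := by
    obtain ⟨k0, hk0⟩ := iso.surjective ⟨a, haF⟩
    refine le_antisymm ?_ (hF _ (hτmemF 0 hc0)).1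
    have h1 : τ 0 = (iso ⟨0, hc0⟩ : ℝ) := by simp [hτ, dif_pos hc0]
    have h2 : (iso ⟨0, hc0⟩ : ℝ) ≤ (iso k0 : ℝ) := by
      refine Subtype.coe_le_coe.2 (iso.monotone ?_)
      rw [Fin.le_def]
      exact Nat.zero_le _
    rw [h1]
    exact h2.trans (le_of_eq (by rw [hk0]))
  set n' := c - 1 with hn'
  have hn'c : n' < c := Nat.sub_lt hc0 one_pos
  have hτlast : τ n' = a + 2 := by
    obtain ⟨k1, hk1⟩ := iso.surjective ⟨a + 2, hbF⟩
    refine le_antisymm (hF _ (hτmemF n' hn'c)).2 ?_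
    have h1 : τ n' = (iso ⟨n', hn'c⟩ : ℝ) := by simp [hτ, dif_pos hn'c]
    have h2 : (iso k1 : ℝ) ≤ (iso ⟨n', hn'c⟩ : ℝ) := by
      refine Subtype.coe_le_coe.2 (iso.monotone ?_)
      rw [Fin.le_def]
      have := k1.isLt
      simp only [hn']
      omega
    rw [h1]
    calc a + 2 = (iso k1 : ℝ) := by rw [hk1]
      _ ≤ _ := h2
  set X : ℕ → Ω → ℝ := fun i ω => W (τ (i + 1)) ω - W (τ i) ω with hX
  have hXm : ∀ i, Measurable (X i) := fun i => (hmeas _).sub (hmeas _)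
  have hτ00 : 0 ≤ τ 0 := by rw [hτ0]; exact ha
  have hind := hindep τ hτmono hτ00
  have hsum_range : ∀ k ω, ∑ i ∈ Finset.range k, X i ω = W (τ k) ω - W (τ 0) ω := by
    intro k ω
    exact Finset.sum_range_sub (fun i => W (τ i) ω) k
  have hsum_Ico : ∀ k, k ≤ n' → ∀ ω,
      ∑ i ∈ Finset.Ico k n', X i ω = W (τ n') ω - W (τ k) ω := by
    intro k hk ω
    rw [Finset.sum_Ico_eq_sub _ hk, hsum_range, hsum_range]
    ring
  have hτnonneg : ∀ k, 0 ≤ τ k := fun k => ha.trans (hτmem k).1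
  -- symmetry hypothesis for levy_max
  have hsym : ∀ k, k ≤ n' →
      (2 : ℝ≥0∞)⁻¹ ≤ P {ω | 0 ≤ ∑ i ∈ Finset.Ico k n', X i ω} ∧
      (2 : ℝ≥0∞)⁻¹ ≤ P {ω | ∑ i ∈ Finset.Ico k n', X i ω ≤ 0} := by
    intro k hk
    have hset1 : {ω | 0 ≤ ∑ i ∈ Finset.Ico k n', X i ω}
        = (fun ω => W (τ n') ω - W (τ k) ω) ⁻¹' (Set.Ici 0) := by
      ext ω
      simp only [Set.mem_setOf_eq, Set.mem_preimage, Set.mem_Ici, hsum_Ico k hk ω]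
    have hset2 : {ω | ∑ i ∈ Finset.Ico k n', X i ω ≤ 0}
        = (fun ω => W (τ n') ω - W (τ k) ω) ⁻¹' (Set.Iic 0) := by
      ext ω
      simp only [Set.mem_setOf_eq, Set.mem_preimage, Set.mem_Iic, hsum_Ico k hk ω]
    have hlaw := hgauss (τ k) (τ n') (hτnonneg k) (hτmono hk)
    have hmm : Measurable (fun ω => W (τ n') ω - W (τ k) ω) := (hmeas _).sub (hmeas _)
    constructor
    · rw [hset1, ← Measure.map_apply hmm measurableSet_Ici, hlaw]
      exact gauss_half.1
    · rw [hset2, ← Measure.map_apply hmm measurableSet_Iic, hlaw]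
      exact gauss_half.2
  have hlevy := levy_max P X hXm hind n' y hy hsym
  -- the event is contained in the discrete maximal event
  have hsub : {ω | ∃ r ∈ F, |W r ω - W a ω| > y}
      ⊆ {ω | ∃ k, k ≤ n' ∧ |∑ i ∈ Finset.range k, X i ω| > y} := by
    rintro ω ⟨r, hrF, hr⟩
    obtain ⟨k, hk⟩ := iso.surjective ⟨r, hrF⟩
    refine ⟨(k : ℕ), by omega, ?_⟩
    rw [hsum_range, hτ0]
    have : τ (k : ℕ) = r := by
      simp only [hτ, dif_pos k.isLt]
      simp [hc, hk]
    rwa [this]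
  -- tail bound for the endpoint
  set Z : Ω → ℝ := fun ω => W (a + 2) ω - W a ω with hZ
  have hZm : Measurable Z := (hmeas _).sub (hmeas _)
  have hZlaw : Measure.map Z P = gaussianReal 0 (a + 2 - a).toNNReal := hgauss a (a + 2) ha (by linarith)
  have hZlaw2 : Measure.map Z P = gaussianReal 0 ((2:ℝ).toNNReal) := by
    rw [hZlaw]; norm_num
  have hv2 : (((2:ℝ).toNNReal : ℝ≥0) : ℝ) ≤ 2 := by
    rw [Real.coe_toNNReal _ (by norm_num)]
  have htail1 : P (Z ⁻¹' (Set.Ici y)) ≤ ENNReal.ofReal (Real.exp (-(y^2)/4)) := by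
    rw [← Measure.map_apply hZm measurableSet_Ici, hZlaw2]
    exact gauss_tail_aux hv2 hy
  have hnegm : Measurable (fun x : ℝ => (-1:ℝ) * x) := measurable_id.const_mul _
  have hZneglaw : Measure.map (fun ω => (-1 : ℝ) * Z ω) P
      = gaussianReal ((-1:ℝ) * 0) (NNReal.mk ((-1:ℝ)^2) (sq_nonneg _) * (2:ℝ).toNNReal) := by
    have h1 : (fun ω => (-1:ℝ) * Z ω) = (fun x : ℝ => (-1:ℝ) * x) ∘ Z := rfl
    rw [h1, ← Measure.map_map hnegm hZm, hZlaw2, gaussianReal_map_const_mul]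
  have htail2 : P ((fun ω => (-1:ℝ) * Z ω) ⁻¹' (Set.Ici y)) ≤ ENNReal.ofReal (Real.exp (-(y^2)/4)) := by
    rw [← Measure.map_apply (hZm.const_mul _) measurableSet_Ici, hZneglaw]
    have h0 : ((-1:ℝ) * 0) = 0 := by norm_num
    rw [h0]
    refine gauss_tail_aux ?_ hy
    push_cast
    rw [Real.coe_toNNReal _ (by norm_num)]
    norm_num
  have hend : P {ω | |∑ i ∈ Finset.range n', X i ω| > y}
      ≤ ENNReal.ofReal (Real.exp (-(y^2)/4)) + ENNReal.ofReal (Real.exp (-(y^2)/4)) := by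
    have hss : {ω | |∑ i ∈ Finset.range n', X i ω| > y}
        ⊆ (Z ⁻¹' (Set.Ici y)) ∪ ((fun ω => (-1:ℝ) * Z ω) ⁻¹' (Set.Ici y)) := by
      intro ω hω
      simp only [Set.mem_setOf_eq, hsum_range, hτ0, hτlast] at hω
      rcases lt_abs.1 hω with h | h
      · exact Or.inl (by simp only [Set.mem_preimage, Set.mem_Ici, hZ]; linarith)
      · exact Or.inr (by simp only [Set.mem_preimage, Set.mem_Ici, hZ]; linarith)
    calc P _ ≤ P ((Z ⁻¹' (Set.Ici y)) ∪ ((fun ω => (-1:ℝ) * Z ω) ⁻¹' (Set.Ici y))) :=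
          measure_mono hss
      _ ≤ P (Z ⁻¹' (Set.Ici y)) + P ((fun ω => (-1:ℝ) * Z ω) ⁻¹' (Set.Ici y)) :=
          measure_union_le _ _
      _ ≤ _ := add_le_add htail1 htail2
  calc P {ω | ∃ r ∈ F, |W r ω - W a ω| > y}
      ≤ P {ω | ∃ k, k ≤ n' ∧ |∑ i ∈ Finset.range k, X i ω| > y} := measure_mono hsub
    _ ≤ 2 * P {ω | |∑ i ∈ Finset.range n', X i ω| > y} := hlevy
    _ ≤ 2 * (ENNReal.ofReal (Real.exp (-(y^2)/4)) + ENNReal.ofReal (Real.exp (-(y^2)/4))) := by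
        gcongr
    _ = ENNReal.ofReal (4 * Real.exp (-(y^2)/4)) := by
        rw [← ENNReal.ofReal_add (by positivity) (by positivity)]
        rw [show (2:ℝ≥0∞) = ENNReal.ofReal 2 by norm_num]
        rw [← ENNReal.ofReal_mul (by norm_num)]
        congr 1
        ring
lemma bm_interval_sup {Ω : Type*} [MeasurableSpace Ω] (P : Measure Ω) [IsProbabilityMeasure P]
    (W : ℝ → Ω → ℝ)
    (hmeas : ∀ t, Measurable (W t))
    (hcont : ∀ᵐ ω ∂P, Continuous fun s => W s ω)
    (hgauss : ∀ s t : ℝ, 0 ≤ s → s ≤ t →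
      Measure.map (fun ω => W t ω - W s ω) P = gaussianReal 0 (t - s).toNNReal)
    (hindep : ∀ (t : ℕ → ℝ), Monotone t → 0 ≤ t 0 →
      iIndepFun (fun i ω => W (t (i + 1)) ω - W (t i) ω) P)
    (a : ℝ) (ha : 0 ≤ a) (y : ℝ) (hy : 0 < y) :
    P {ω | ∃ s, a ≤ s ∧ s ≤ a + 2 ∧ |W s ω - W a ω| > y}
      ≤ ENNReal.ofReal (4 * Real.exp (-(y^2)/4)) := by
  classical
  obtain ⟨e, he⟩ := exists_surjective_nat ℚ
  set U : ℕ → Set Ω := fun m =>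
    {ω | a ≤ ((e m : ℚ) : ℝ) ∧ ((e m : ℚ) : ℝ) ≤ a + 2 ∧ |W ((e m : ℚ) : ℝ) ω - W a ω| > y}
    with hU
  set V : ℕ → Set Ω := fun n => ⋃ m ∈ Finset.range (n+1), U m with hV
  have hVmono : Monotone V := by
    intro i j hij
    refine Set.iUnion₂_subset fun m hm => ?_
    refine Set.subset_iUnion₂ (s := fun m _ => U m) m ?_
    rw [Finset.mem_range] at *
    omega
  -- step 1: the event is covered by the countable union plus a null set
  have hstep1 : {ω | ∃ s, a ≤ s ∧ s ≤ a + 2 ∧ |W s ω - W a ω| > y}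
      ⊆ (⋃ n, V n) ∪ {ω | ¬ Continuous fun s => W s ω} := by
    intro ω hω
    by_cases hcω : Continuous fun s => W s ω
    · left
      obtain ⟨s, hs1, hs2, hs3⟩ := hω
      have hg : Continuous fun u => |W u ω - W a ω| := (hcω.sub continuous_const).abs
      set ε : ℝ := |W s ω - W a ω| - y with hε
      have hε0 : 0 < ε := by simp only [hε]; linarith
      obtain ⟨δ, hδ0, hδ⟩ := Metric.continuous_iff.1 hg s ε hε0
      have hlr : max (s - δ) a < min (s + δ) (a + 2) := by
        rw [max_lt_iff, lt_min_iff, lt_min_iff]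
        refine ⟨⟨by linarith, by linarith⟩, by linarith, by linarith⟩
      obtain ⟨q, hq1, hq2⟩ := exists_rat_btwn hlr
      rw [max_lt_iff] at hq1
      rw [lt_min_iff] at hq2
      have hqdist : dist ((q:ℝ)) s < δ := by
        rw [Real.dist_eq, abs_sub_lt_iff]
        constructor <;> linarith [hq1.1, hq2.1]
      have hqval : |W ((q:ℝ)) ω - W a ω| > y := by
        have := hδ (q:ℝ) hqdist
        rw [Real.dist_eq, abs_sub_lt_iff] at this
        simp only [hε] at this
        linarith [this.2]
      obtain ⟨m, hm⟩ := he q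
      refine Set.mem_iUnion.2 ⟨m, ?_⟩
      refine Set.mem_biUnion (Finset.self_mem_range_succ m) ?_
      rw [hU]
      refine ⟨?_, ?_, ?_⟩ <;> rw [hm]
      · exact le_of_lt hq1.2
      · exact le_of_lt hq2.2
      · exact hqval
    · right
      exact hcω
  have hnull : P {ω | ¬ Continuous fun s => W s ω} = 0 := by
    exact ae_iff.1 hcont
  have hstep2 : P {ω | ∃ s, a ≤ s ∧ s ≤ a + 2 ∧ |W s ω - W a ω| > y} ≤ P (⋃ n, V n) := by
    calc P _ ≤ P ((⋃ n, V n) ∪ {ω | ¬ Continuous fun s => W s ω}) := measure_mono hstep1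
      _ ≤ P (⋃ n, V n) + P {ω | ¬ Continuous fun s => W s ω} := measure_union_le _ _
      _ = P (⋃ n, V n) := by rw [hnull, add_zero]
  have hstep3 : P (⋃ n, V n) = ⨆ n, P (V n) := Directed.measure_iUnion hVmono.directed_le
  have hstep4 : ∀ n, P (V n) ≤ ENNReal.ofReal (4 * Real.exp (-(y^2)/4)) := by
    intro n
    set F : Finset ℝ := insert a (insert (a + 2)
      (((Finset.range (n+1)).image (fun m => ((e m : ℚ) : ℝ))).filter
        (fun q => a ≤ q ∧ q ≤ a + 2))) with hF
    have haF : a ∈ F := Finset.mem_insert_self _ _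
    have hbF : a + 2 ∈ F := Finset.mem_insert_of_mem (Finset.mem_insert_self _ _)
    have hFbd : ∀ r ∈ F, a ≤ r ∧ r ≤ a + 2 := by
      intro r hr
      rcases Finset.mem_insert.1 hr with rfl | hr
      · exact ⟨le_rfl, by linarith⟩
      rcases Finset.mem_insert.1 hr with rfl | hr
      · exact ⟨by linarith, le_rfl⟩
      · exact (Finset.mem_filter.1 hr).2
    have hsub : V n ⊆ {ω | ∃ r ∈ F, |W r ω - W a ω| > y} := by
      intro ω hω
      rw [hV] at hω
      obtain ⟨m, hm, hωm⟩ := Set.mem_iUnion₂.1 hω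
      obtain ⟨h1, h2, h3⟩ := hωm
      refine ⟨((e m : ℚ) : ℝ), ?_, h3⟩
      refine Finset.mem_insert_of_mem (Finset.mem_insert_of_mem ?_)
      refine Finset.mem_filter.2 ⟨Finset.mem_image.2 ⟨m, hm, rfl⟩, h1, h2⟩
    calc P (V n) ≤ P {ω | ∃ r ∈ F, |W r ω - W a ω| > y} := measure_mono hsub
      _ ≤ _ := bm_finite_sup P W hmeas hgauss hindep a ha y hy F haF hbF hFbd
  rw [hstep3] at hstep2
  exact le_trans hstep2 (iSup_le hstep4)

lemma exp_bd1 {dr L : ℝ} (hd1 : 1 ≤ dr) (hL1 : 1 ≤ L) :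
    Real.log dr + L - (9/16) * dr^2 * L^2 ≤ 1/2 := by
  have hlogd : Real.log dr ≤ dr - 1 := Real.log_le_sub_one_of_pos (by linarith)
  have h1 : 0 ≤ (dr - 1) * (9 * dr - 7) := by nlinarith
  have h2 : 0 ≤ (dr^2 - 1) * (L^2 - 1) := mul_nonneg (by nlinarith) (by nlinarith)
  have h3 : 0 ≤ (L - 8/9)^2 := sq_nonneg _
  nlinarith
lemma exp_bd2 {dr L : ℝ} (hd1 : 1 ≤ dr) (hL1 : 1 ≤ L) :
    Real.log dr - (9/16) * dr^2 * L^2 ≤ -(1/2) := by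
  have hlogd : Real.log dr ≤ dr - 1 := Real.log_le_sub_one_of_pos (by linarith)
  have h1 : 0 ≤ (dr - 1) * (9 * dr - 7) := by nlinarith
  have h2 : 0 ≤ (dr^2 - 1) * (L^2 - 1) := mul_nonneg (by nlinarith) (by nlinarith)
  nlinarith
lemma exp_bd3 {dr L x : ℝ} (hd1 : 1 ≤ dr) (hL1 : 1 ≤ L) (hx : 0 ≤ x) :
    (9/16) * dr^2 * L^2 + x / (3 * dr) ≤ ((3 * dr * L + x)/2)^2/4 := by
  have h1 : x / (3 * dr) ≤ (3/8) * dr * L * x := by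
    rw [div_le_iff₀ (by linarith)]
    have hh : (1:ℝ) ≤ (9/8) * dr^2 * L := by nlinarith
    nlinarith [mul_le_mul_of_nonneg_left hh hx]
  nlinarith [sq_nonneg x]
set_option maxHeartbeats 1000000 in
/-- bound for the term `Φ₇`. With `y(u) = N⁻¹(u/γ)` and the deterministic
bound `|u/γ − N(y(u))| ≤ 1`, for `t ≥ e`, `x ≥ 0` (max norm on `Fin d → ℝ`):
`P(sup_{u ≤ t} |W*_{N(y(u))} − W*_{u/γ}| > 3d log t + x) ≤ 4(γ⁻¹ + e⁻¹) e^{1/2 − x/(3d)}`. -/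
theorem stmt14
    {Ω : Type*} [MeasurableSpace Ω] (P : Measure Ω) [IsProbabilityMeasure P]
    (d : ℕ) (hd : 0 < d)
    (Wstar : ℝ → Ω → Fin d → ℝ) (hW : IsBrownianMotionVec P d Wstar)
    (lam γ : ℝ) (hlam : 0 < lam) (hγ : 0 < γ)
    (N : ℝ → Ω → ℕ) (hN : IsPoissonProcess P N lam)
    (t x : ℝ) (ht : Real.exp 1 ≤ t) (hx : 0 ≤ x)
    (hclose : ∀ ω, ∀ u : ℝ, 0 ≤ u → u ≤ t →
      |u / γ - (N (firstPassage N (u / γ) ω) ω : ℝ)| ≤ 1) :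
    P {ω | ∃ u : ℝ, 0 ≤ u ∧ u ≤ t ∧
        ‖Wstar ((N (firstPassage N (u / γ) ω) ω : ℝ)) ω - Wstar (u / γ) ω‖
          > 3 * d * Real.log t + x}
      ≤ ENNReal.ofReal (4 * (γ⁻¹ + (Real.exp 1)⁻¹)
          * Real.exp (1 / 2 - x / (3 * d))) := by
  classical
  have ht0 : (0:ℝ) < t := lt_of_lt_of_le (Real.exp_pos 1) ht
  set L : ℝ := Real.log t with hLdef
  have hL1 : 1 ≤ L := (Real.le_log_iff_exp_le ht0).2 ht
  have hd1 : (1:ℝ) ≤ (d:ℝ) := by exact_mod_cast hd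
  have hdpos : (0:ℝ) < (d:ℝ) := by linarith
  set c : ℝ := 3 * (d:ℝ) * Real.log t + x with hcdef
  have hc0 : (0:ℝ) < c := by
    rw [hcdef, ← hLdef]
    nlinarith
  set y : ℝ := c / 2 with hydef
  have hy : 0 < y := by positivity
  set M : ℕ := Nat.floor (t / γ) with hM
  set A : Fin d → ℕ → Set Ω := fun i j =>
    {ω | ∃ s, (j:ℝ) ≤ s ∧ s ≤ (j:ℝ) + 2 ∧ |Wstar s ω i - Wstar (j:ℝ) ω i| > y} with hA
  -- inclusion of the event into the union of per-coordinate, per-interval events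
  have hincl : {ω | ∃ u : ℝ, 0 ≤ u ∧ u ≤ t ∧
        ‖Wstar ((N (firstPassage N (u / γ) ω) ω : ℝ)) ω - Wstar (u / γ) ω‖
          > 3 * d * Real.log t + x}
      ⊆ ⋃ p : Fin d × Fin (M+1), A p.1 (p.2 : ℕ) := by
    rintro ω ⟨u, hu0, hut, hnorm⟩
    set b : ℝ := u / γ with hb
    set aN : ℝ := ((N (firstPassage N b ω) ω : ℕ) : ℝ) with haN
    have hb0 : 0 ≤ b := div_nonneg hu0 hγ.le
    have hbt : b ≤ t / γ := by
      rw [hb]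
      gcongr
    have ha0 : 0 ≤ aN := Nat.cast_nonneg _
    have hcl : |b - aN| ≤ 1 := hclose ω u hu0 hut
    have habs := abs_le.1 hcl
    have hex : ∃ i : Fin d, |Wstar aN ω i - Wstar b ω i| > c := by
      by_contra h
      push_neg at h
      have hle : ‖Wstar aN ω - Wstar b ω‖ ≤ c := by
        refine (pi_norm_le_iff_of_nonneg hc0.le).2 (fun i => ?_)
        rw [Pi.sub_apply, Real.norm_eq_abs]
        exact h i
      rw [hcdef] at hle
      exact absurd hnorm (not_lt.2 hle)
    obtain ⟨i, hi⟩ := hex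
    set j : ℕ := Nat.floor (min aN b) with hj
    have hjb : (j:ℝ) ≤ min aN b := Nat.floor_le (le_min ha0 hb0)
    have hmax : max aN b ≤ min aN b + 1 := by
      rcases le_total aN b with h | h
      · rw [max_eq_right h, min_eq_left h]; linarith [habs.2]
      · rw [max_eq_left h, min_eq_right h]; linarith [habs.1]
    have hminlt : min aN b < (j:ℝ) + 1 := Nat.lt_floor_add_one _
    have haN2 : aN ≤ (j:ℝ) + 2 := by
      have := le_max_left aN b
      linarith
    have hb2 : b ≤ (j:ℝ) + 2 := by
      have := le_max_right aN b
      linarith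
    have hjaN : (j:ℝ) ≤ aN := le_trans hjb (min_le_left _ _)
    have hjbb : (j:ℝ) ≤ b := le_trans hjb (min_le_right _ _)
    have hjM : j ≤ M := by
      rw [hj, hM]
      exact Nat.floor_mono (le_trans (min_le_right _ _) hbt)
    have htri : |Wstar aN ω i - Wstar b ω i|
        ≤ |Wstar aN ω i - Wstar (j:ℝ) ω i| + |Wstar (j:ℝ) ω i - Wstar b ω i| :=
      abs_sub_le _ _ _
    refine Set.mem_iUnion.2 ⟨(i, ⟨j, Nat.lt_succ_of_le hjM⟩), ?_⟩
    rcases lt_or_ge y |Wstar aN ω i - Wstar (j:ℝ) ω i| with h | h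
    · exact ⟨aN, hjaN, haN2, h⟩
    · refine ⟨b, hjbb, hb2, ?_⟩
      rw [abs_sub_comm]
      have : 2 * y < |Wstar aN ω i - Wstar b ω i| := by
        rw [hydef]; linarith
      linarith
  -- bound for each piece
  have hAbd : ∀ (i : Fin d) (j : ℕ),
      P (A i j) ≤ ENNReal.ofReal (4 * Real.exp (-(y^2)/4)) := by
    intro i j
    obtain ⟨h1, h2, h3, h4, h5⟩ := hW.1 i
    exact bm_interval_sup P (fun s ω => Wstar s ω i) h1 h3 h4 h5 (j:ℝ) (Nat.cast_nonneg j) y hy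
  -- union bound
  have hUB : P {ω | ∃ u : ℝ, 0 ≤ u ∧ u ≤ t ∧
        ‖Wstar ((N (firstPassage N (u / γ) ω) ω : ℝ)) ω - Wstar (u / γ) ω‖
          > 3 * d * Real.log t + x}
      ≤ ((d * (M+1) : ℕ) : ℝ≥0∞) * ENNReal.ofReal (4 * Real.exp (-(y^2)/4)) := by
    calc P _ ≤ P (⋃ p : Fin d × Fin (M+1), A p.1 (p.2 : ℕ)) := measure_mono hincl
      _ ≤ ∑' p : Fin d × Fin (M+1), P (A p.1 (p.2 : ℕ)) := measure_iUnion_le _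
      _ ≤ ∑' _p : Fin d × Fin (M+1), ENNReal.ofReal (4 * Real.exp (-(y^2)/4)) :=
          ENNReal.tsum_le_tsum (fun p => hAbd p.1 p.2)
      _ = ((d * (M+1) : ℕ) : ℝ≥0∞) * ENNReal.ofReal (4 * Real.exp (-(y^2)/4)) := by
          rw [tsum_fintype, Finset.sum_const, Finset.card_univ, Fintype.card_prod,
            Fintype.card_fin, Fintype.card_fin, nsmul_eq_mul]
  refine le_trans hUB ?_
  rw [← ENNReal.ofReal_natCast (d * (M+1)), ← ENNReal.ofReal_mul (Nat.cast_nonneg _)]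
  refine ENNReal.ofReal_le_ofReal ?_
  -- now a purely real inequality
  have hMle : ((M:ℕ):ℝ) ≤ t / γ := Nat.floor_le (by positivity)
  set A0 : ℝ := (9/16) * (d:ℝ)^2 * L^2 with hA0
  set Ex : ℝ := Real.exp (-(x / (3 * (d:ℝ)))) with hEx
  have hyexp : Real.exp (-(y^2)/4) ≤ Real.exp (-A0) * Ex := by
    rw [hEx, ← Real.exp_add]
    refine Real.exp_le_exp.2 ?_
    have key : A0 + x / (3 * (d:ℝ)) ≤ y^2/4 := by
      rw [hydef, hcdef, ← hLdef, hA0]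
      exact exp_bd3 hd1 hL1 hx
    linarith
  have hexp1 : (d:ℝ) * t * Real.exp (-A0) ≤ Real.exp (1/2) := by
    have hdt : (d:ℝ) * t = Real.exp (Real.log d + L) := by
      rw [Real.exp_add, Real.exp_log hdpos, hLdef, Real.exp_log ht0]
    rw [hdt, ← Real.exp_add]
    refine Real.exp_le_exp.2 ?_
    rw [hA0]
    linarith [exp_bd1 hd1 hL1]
  have hexp2 : (d:ℝ) * Real.exp (-A0) ≤ Real.exp (-(1/2)) := by
    have hdd : (d:ℝ) = Real.exp (Real.log d) := (Real.exp_log hdpos).symm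
    rw [hdd, ← Real.exp_add]
    refine Real.exp_le_exp.2 ?_
    rw [hA0]
    linarith [exp_bd2 hd1 hL1]
  have hEx0 : 0 < Ex := Real.exp_pos _
  have hE00 : 0 < Real.exp (-A0) := Real.exp_pos _
  have hfin : Real.exp (1/2 - x / (3 * (d:ℝ))) = Real.exp (1/2) * Ex := by
    rw [hEx, ← Real.exp_add, sub_eq_add_neg]
  have hneg : Real.exp (-(1/2) : ℝ) = (Real.exp 1)⁻¹ * Real.exp (1/2) := by
    rw [← Real.exp_neg, ← Real.exp_add]
    norm_num
  calc ((d * (M+1) : ℕ) : ℝ) * (4 * Real.exp (-(y^2)/4))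
      ≤ ((d:ℝ) * (t/γ + 1)) * (4 * (Real.exp (-A0) * Ex)) := by
        have httγ : (0:ℝ) < t / γ := div_pos ht0 hγ
        refine mul_le_mul ?_ ?_ (by positivity) (by nlinarith)
        · push_cast
          nlinarith
        · nlinarith [hyexp]
      _ = 4 * (((d:ℝ) * t * Real.exp (-A0)) / γ + (d:ℝ) * Real.exp (-A0)) * Ex := by
        field_simp
      _ ≤ 4 * (Real.exp (1/2) / γ + Real.exp (-(1/2))) * Ex := by
        refine mul_le_mul_of_nonneg_right ?_ hEx0.le
        refine mul_le_mul_of_nonneg_left ?_ (by norm_num)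
        refine add_le_add ?_ hexp2
        gcongr
      _ = 4 * (γ⁻¹ + (Real.exp 1)⁻¹) * Real.exp (1/2 - x / (3 * (d:ℝ))) := by
        rw [hfin, hneg, div_eq_mul_inv]
        ring
end
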